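/- arXiv:1710.09451 — 8 statements merged into one kernel-verified Lean document; each statement's English description precedes it below -/
import Mathlib

section
/- Almost surely, the number of samples M in [0,1] satisfies M > n(1 − ρ)/λ − 1. Consequently, if n(1 − ρ) > λ, then almost surely 1/M < λ/(n(1 − ρ) − λ) and hence E[1/M] ≤ λ/(n(1 − ρ) − λ). -/
open MeasureTheory ProbabilityTheory Real

theorem stmt_0
    {Ω : Type*} [MeasurableSpace Ω] (μ : Measure Ω) [IsProbabilityMeasure μ]
    (ρ lam : ℝ) (n : ℕ)
    (hρ0 : 0 ≤ ρ) (hρ1 : ρ < 1) (hlam : 1 < lam) (hn : 0 < n)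
    (Y X S : ℕ → Ω → ℝ) (M : Ω → ℕ)
    (hYmeas : ∀ i, Measurable (Y i))
    (hYindep : iIndepFun Y μ)
    (hYident : ∀ i, IdentDistrib (Y i) (Y 1) μ μ)
    (hYbd : ∀ i, ∀ᵐ ω ∂μ, 0 < Y i ω ∧ Y i ω ≤ lam / n)
    (hYmean : ∀ i, ∫ ω, Y i ω ∂μ = 1 / n)
    (hX1 : ∀ ω, X 1 ω = Y 1 ω)
    (hXrec : ∀ i, 2 ≤ i → ∀ ω, X i ω = ρ * X (i - 1) ω + Y i ω)
    (hS : ∀ m ω, S m ω = ∑ i ∈ Finset.Icc 1 m, X i ω)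
    (hMmeas : Measurable M)
    (hM : ∀ᵐ ω ∂μ, S (M ω) ω ≤ 1 ∧ 1 < S (M ω + 1) ω) :
    (∀ᵐ ω ∂μ, (n : ℝ) * (1 - ρ) / lam - 1 < (M ω : ℝ)) ∧
    (lam < (n : ℝ) * (1 - ρ) →
      (∀ᵐ ω ∂μ, 1 / (M ω : ℝ) < lam / ((n : ℝ) * (1 - ρ) - lam)) ∧
      ∫ ω, 1 / (M ω : ℝ) ∂μ ≤ lam / ((n : ℝ) * (1 - ρ) - lam)) := by
  have hn' : (0:ℝ) < n := by exact_mod_cast hn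
  have hlam0 : (0:ℝ) < lam := lt_trans one_pos hlam
  have hρ' : (0:ℝ) < 1 - ρ := by linarith
  set C : ℝ := lam / (n * (1 - ρ)) with hC
  have hC0 : 0 < C := div_pos hlam0 (mul_pos hn' hρ')
  -- main a.e. lower bound on M
  have key : ∀ᵐ ω ∂μ, (n : ℝ) * (1 - ρ) / lam - 1 < (M ω : ℝ) := by
    filter_upwards [hM, (ae_all_iff).2 hYbd] with ω hMω hYω
    -- X i ω ≤ C for all i ≥ 1
    have hXbd : ∀ i, 1 ≤ i → X i ω ≤ C := by
      intro i hi
      induction i, hi using Nat.le_induction with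
      | base =>
        rw [hX1]
        have h1 : Y 1 ω ≤ lam / n := (hYω 1).2
        have : lam / n ≤ C := by
          rw [hC, div_le_div_iff₀ hn' (mul_pos hn' hρ')]
          nlinarith [mul_nonneg (mul_nonneg hlam0.le hn'.le) hρ0]
        linarith
      | succ i hi ih =>
        have h2 : 2 ≤ i + 1 := by omega
        rw [hXrec (i+1) h2 ω]
        simp only [Nat.add_sub_cancel]
        have hY : Y (i+1) ω ≤ lam / n := (hYω (i+1)).2
        have hCeq : ρ * C + lam / n = C := by
          rw [hC]; field_simp; ring
        nlinarith
    -- sum bound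
    have hSbd : S (M ω + 1) ω ≤ (M ω + 1 : ℝ) * C := by
      rw [hS]
      calc ∑ i ∈ Finset.Icc 1 (M ω + 1), X i ω
          ≤ ∑ i ∈ Finset.Icc 1 (M ω + 1), C := by
            apply Finset.sum_le_sum
            intro i hi
            exact hXbd i (Finset.mem_Icc.1 hi).1
        _ = (M ω + 1 : ℝ) * C := by
            rw [Finset.sum_const, Nat.card_Icc]
            simp [nsmul_eq_mul]
    have h1 : (1:ℝ) < (M ω + 1 : ℝ) * C := lt_of_lt_of_le hMω.2 hSbd
    have : (n : ℝ) * (1 - ρ) / lam < (M ω + 1 : ℝ) := by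
      rw [div_lt_iff₀ hlam0]
      rw [hC] at h1
      have h2 : (1:ℝ) < ((M ω : ℝ) + 1) * lam / ((n:ℝ) * (1 - ρ)) := by
        rw [mul_div_assoc]; exact h1
      have := (lt_div_iff₀ (mul_pos hn' hρ')).1 h2
      linarith
    linarith
  refine ⟨key, fun hcond => ?_⟩
  have hD : (0:ℝ) < (n : ℝ) * (1 - ρ) - lam := by linarith
  have hae : ∀ᵐ ω ∂μ, 1 / (M ω : ℝ) < lam / ((n : ℝ) * (1 - ρ) - lam) := by
    filter_upwards [key] with ω hω
    have hgt : ((n : ℝ) * (1 - ρ) - lam) / lam < (M ω : ℝ) := by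
      rw [sub_div]
      have : lam / lam = 1 := div_self (ne_of_gt hlam0)
      linarith [hω]
    have hpos : (0:ℝ) < ((n : ℝ) * (1 - ρ) - lam) / lam := div_pos hD hlam0
    have := one_div_lt_one_div_of_lt hpos hgt
    rwa [one_div_div] at this
  refine ⟨hae, ?_⟩
  have hmeas : Measurable fun ω => 1 / (M ω : ℝ) :=
    (measurable_from_top (f := fun m : ℕ => 1 / (m : ℝ))).comp hMmeas
  have hint : Integrable (fun ω => 1 / (M ω : ℝ)) μ := by
    refine (integrable_const (lam / ((n : ℝ) * (1 - ρ) - lam))).mono'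
      hmeas.aestronglyMeasurable ?_
    filter_upwards [hae] with ω hω
    rw [Real.norm_eq_abs, abs_of_nonneg (by positivity)]
    exact le_of_lt hω
  calc ∫ ω, 1 / (M ω : ℝ) ∂μ
      ≤ ∫ _ω, lam / ((n : ℝ) * (1 - ρ) - lam) ∂μ :=
        integral_mono_ae hint (integrable_const _) (hae.mono fun ω h => le_of_lt h)
    _ = lam / ((n : ℝ) * (1 - ρ) - lam) := by simp
end

section
/- The expectation of the overshoot location satisfies the upper bound E[S_{M+1}] ≤ (E[M] + 1)/(n(1 − ρ)). -/
open MeasureTheory ProbabilityTheory Real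
open scoped ENNReal NNReal

-- helper: tsum of a cut-off sequence
lemma helper_tsum_ite (N : ℕ) (v : ℕ → ℝ) :
    ∑' j : ℕ, (if j < N then v j else 0) = ∑ j ∈ Finset.range N, v j := by
  rw [tsum_eq_sum (s := Finset.range N) (fun j hj => if_neg (by simpa using hj))]
  exact Finset.sum_congr rfl fun j hj => if_pos (Finset.mem_range.mp hj)

-- helper: geometric partial sum bound
lemma helper_geom_bound {ρ : ℝ} (hρ0 : 0 ≤ ρ) (hρ1 : ρ < 1) (k m : ℕ) :
    ∑ i ∈ Finset.Icc k m, ρ ^ (i - k) ≤ (1 - ρ)⁻¹ := by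
  have h1 : (0:ℝ) < 1 - ρ := by linarith
  rcases le_or_gt k m with h | h
  · have : ∑ i ∈ Finset.Icc k m, ρ ^ (i - k) = ∑ i ∈ Finset.range (m + 1 - k), ρ ^ i := by
      rw [← Finset.Ico_add_one_right_eq_Icc, Finset.sum_Ico_eq_sum_range]
      exact Finset.sum_congr rfl fun i _ => by rw [Nat.add_sub_cancel_left]
    rw [this]
    have h2 := geom_sum_mul ρ (m + 1 - k)
    have h3 : (0:ℝ) ≤ ρ ^ (m + 1 - k) := pow_nonneg hρ0 _
    rw [inv_eq_one_div, le_div_iff₀ h1]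
    nlinarith [h2]
  · rw [Finset.Icc_eq_empty (by omega)]
    simp [inv_nonneg, h1.le]

lemma helper_coef_ge_one {ρ : ℝ} (hρ0 : 0 ≤ ρ) {k m : ℕ} (hk : k ∈ Finset.Icc 1 m) :
    1 ≤ ∑ i ∈ Finset.Icc k m, ρ ^ (i - k) := by
  have hmem : k ∈ Finset.Icc k m := by
    simp only [Finset.mem_Icc] at hk ⊢; omega
  have := Finset.single_le_sum (f := fun i => ρ ^ (i - k))
    (fun i _ => pow_nonneg hρ0 _) hmem
  simpa using this

theorem stmt_4
    {Ω : Type*} [MeasurableSpace Ω] (μ : Measure Ω) [IsProbabilityMeasure μ]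
    (ρ lam : ℝ) (n : ℕ)
    (hρ0 : 0 ≤ ρ) (hρ1 : ρ < 1) (hlam : 1 < lam) (hn : 0 < n)
    (Y X S : ℕ → Ω → ℝ) (M : Ω → ℕ)
    (hYmeas : ∀ i, Measurable (Y i))
    (hYindep : iIndepFun (m := fun _ : ℕ => (inferInstance : MeasurableSpace ℝ)) Y μ)
    (hYident : ∀ i, IdentDistrib (Y i) (Y 1) μ μ)
    (hYbd : ∀ i, ∀ᵐ ω ∂μ, 0 < Y i ω ∧ Y i ω ≤ lam / n)
    (hYmean : ∀ i, ∫ ω, Y i ω ∂μ = 1 / n)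
    (hX1 : ∀ ω, X 1 ω = Y 1 ω)
    (hXrec : ∀ i, 2 ≤ i → ∀ ω, X i ω = ρ * X (i - 1) ω + Y i ω)
    (hS : ∀ m ω, S m ω = ∑ i ∈ Finset.Icc 1 m, X i ω)
    (hMmeas : Measurable M)
    (hM : ∀ᵐ ω ∂μ, S (M ω) ω ≤ 1 ∧ 1 < S (M ω + 1) ω) :
    ∫ ω, S (M ω + 1) ω ∂μ ≤ ((∫ ω, (M ω : ℝ) ∂μ) + 1) / ((n : ℝ) * (1 - ρ)) := by
  classical
  have h1ρ : (0:ℝ) < 1 - ρ := by linarith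
  have hnR : (0:ℝ) < n := by exact_mod_cast hn
  -- closed form for X
  have hXform : ∀ i, 1 ≤ i → ∀ ω, X i ω = ∑ k ∈ Finset.Icc 1 i, ρ ^ (i - k) * Y k ω := by
    intro i hi
    induction i with
    | zero => omega
    | succ i ih =>
      rcases Nat.eq_or_lt_of_le hi with h1 | h1
      · intro ω
        rw [← h1]
        simp [hX1 ω]
      · intro ω
        have hi' : 1 ≤ i := by omega
        rw [hXrec (i+1) (by omega) ω]
        simp only [Nat.add_sub_cancel]
        rw [ih hi' ω, Finset.sum_Icc_succ_top (by omega : 1 ≤ i + 1), Finset.mul_sum]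
        congr 1
        · refine Finset.sum_congr rfl fun k hk => ?_
          have hk' := Finset.mem_Icc.mp hk
          have : i + 1 - k = (i - k) + 1 := by omega
          rw [this, pow_succ]
          ring
        · simp
  -- closed form for S
  have hSform : ∀ m ω, S m ω
      = ∑ k ∈ Finset.Icc 1 m, (∑ i ∈ Finset.Icc k m, ρ ^ (i - k)) * Y k ω := by
    intro m ω
    rw [hS]
    rw [Finset.sum_congr rfl fun i hi => hXform i (Finset.mem_Icc.mp hi).1 ω]
    rw [Finset.sum_comm' (t' := Finset.Icc 1 m) (s' := fun k => Finset.Icc k m)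
      (by intro x y; simp only [Finset.mem_Icc]; omega)]
    exact Finset.sum_congr rfl fun k _ => by rw [Finset.sum_mul]
  -- measurability of S m
  have hSmeas : ∀ m, Measurable (S m) := by
    intro m
    have : S m = fun ω => ∑ k ∈ Finset.Icc 1 m,
        (∑ i ∈ Finset.Icc k m, ρ ^ (i - k)) * Y k ω := funext fun ω => hSform m ω
    rw [this]
    exact Finset.measurable_sum _ fun k _ => (hYmeas k).const_mul _
  -- W
  set W : ℕ → Ω → ℝ := fun m ω => ∑ k ∈ Finset.Icc 1 m, Y k ω with hW_def
  have hWmeas : ∀ m, Measurable (W m) :=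
    fun m => Finset.measurable_sum _ fun k _ => hYmeas k
  -- measurability of ω ↦ S (M ω + 1) ω
  have hTmeas : Measurable (fun ω => S (M ω + 1) ω) := by
    have h1 : Measurable (fun p : Ω × ℕ => S (p.2 + 1) p.1) :=
      measurable_from_prod_countable_left fun m => hSmeas (m + 1)
    exact h1.comp (measurable_id.prodMk hMmeas)
  have hZmeas : Measurable (fun ω => W (M ω + 1) ω) := by
    have h1 : Measurable (fun p : Ω × ℕ => W (p.2 + 1) p.1) :=
      measurable_from_prod_countable_left fun m => hWmeas (m + 1)
    exact h1.comp (measurable_id.prodMk hMmeas)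
  -- the good event
  have hAE : ∀ᵐ ω ∂μ, (∀ i, 0 < Y i ω ∧ Y i ω ≤ lam / n)
      ∧ S (M ω) ω ≤ 1 ∧ 1 < S (M ω + 1) ω := (ae_all_iff.2 hYbd).and hM
  -- pointwise facts assuming positivity of the Y's
  have hWS : ∀ ω, (∀ i, 0 < Y i ω) → ∀ m, W m ω ≤ S m ω := by
    intro ω hY m
    rw [hSform m ω]
    refine Finset.sum_le_sum fun k hk => ?_
    have h1 : 1 ≤ ∑ i ∈ Finset.Icc k m, ρ ^ (i - k) := helper_coef_ge_one hρ0 hk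
    nlinarith [(hY k)]
  have hSW : ∀ ω, (∀ i, 0 < Y i ω) → ∀ m, S m ω ≤ (1 - ρ)⁻¹ * W m ω := by
    intro ω hY m
    rw [hSform m ω, hW_def, Finset.mul_sum]
    refine Finset.sum_le_sum fun k hk => ?_
    have h1 := helper_geom_bound hρ0 hρ1 k m
    nlinarith [(hY k)]
  have hSmono : ∀ ω, (∀ i, 0 < Y i ω) → ∀ a b, a ≤ b → S a ω ≤ S b ω := by
    intro ω hY a b hab
    have hXpos : ∀ i ∈ Finset.Ioc a b, 0 ≤ X i ω := by
      intro i hi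
      have hi1 : 1 ≤ i := by have := Finset.mem_Ioc.mp hi; omega
      rw [hXform i hi1 ω]
      exact Finset.sum_nonneg fun k _ => mul_nonneg (pow_nonneg hρ0 _) (hY k).le
    have key : S b ω = S a ω + ∑ i ∈ Finset.Ioc a b, X i ω := by
      rw [hS a ω, hS b ω]
      have e1 : Finset.Icc 1 a = Finset.Ioc 0 a := (Finset.Icc_add_one_left_eq_Ioc 0 a).symm
      have e2 : Finset.Icc 1 b = Finset.Ioc 0 b := (Finset.Icc_add_one_left_eq_Ioc 0 b).symm
      rw [e1, e2, Finset.sum_Ioc_consecutive _ (Nat.zero_le a) hab]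
    rw [key]
    have := Finset.sum_nonneg hXpos
    linarith
  have hMiff : ∀ ω, (∀ i, 0 < Y i ω) → S (M ω) ω ≤ 1 → 1 < S (M ω + 1) ω →
      ∀ m, (S m ω ≤ 1 ↔ m ≤ M ω) := by
    intro ω hY h1 h2 m
    constructor
    · intro hm
      by_contra hc
      have : M ω + 1 ≤ m := by omega
      have := hSmono ω hY _ _ this
      linarith
    · intro hm
      have := hSmono ω hY _ _ hm
      linarith
  set c : ℝ := mgf (Y 1) μ (-1) with hc_def
  -- integrability of exp(-Y i)
  have hexp_int : ∀ i, Integrable (fun ω => exp (-1 * Y i ω)) μ := by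
    intro i
    refine Integrable.mono' (integrable_const 1)
      (((hYmeas i).const_mul (-1)).exp.aestronglyMeasurable) ?_
    filter_upwards [hYbd i] with ω hω
    rw [Real.norm_eq_abs, abs_of_pos (exp_pos _)]
    have : -1 * Y i ω ≤ 0 := by nlinarith [hω.1]
    calc exp (-1 * Y i ω) ≤ exp 0 := exp_le_exp.mpr this
    _ = 1 := exp_zero
  have hc0 : 0 ≤ c := mgf_nonneg
  -- identical distribution gives same mgf
  have hmgf_eq : ∀ i, mgf (Y i) μ (-1) = c := by
    intro i
    rw [hc_def]
    unfold mgf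
    exact ((hYident i).comp (measurable_exp.comp (measurable_id.const_mul (-1)))).integral_eq
  -- c < 1
  have hc1 : c < 1 := by
    have hint1 : Integrable (fun ω => 1 - exp (-1 * Y 1 ω)) μ :=
      (integrable_const 1).sub (hexp_int 1)
    have hnonneg : 0 ≤ᵐ[μ] fun ω => 1 - exp (-1 * Y 1 ω) := by
      filter_upwards [hYbd 1] with ω hω
      have : -1 * Y 1 ω ≤ 0 := by nlinarith [hω.1]
      have := exp_le_exp.mpr this
      simp only [exp_zero] at this
      simp only [Pi.zero_apply]
      linarith
    have hpos : 0 < ∫ ω, (1 - exp (-1 * Y 1 ω)) ∂μ := by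
      rw [integral_pos_iff_support_of_nonneg_ae hnonneg hint1]
      have hsub : {ω | 0 < Y 1 ω ∧ Y 1 ω ≤ lam / n}
          ⊆ Function.support fun ω => 1 - exp (-1 * Y 1 ω) := by
        intro ω hω
        have h1 : -1 * Y 1 ω < 0 := by nlinarith [hω.1]
        have h2 : exp (-1 * Y 1 ω) < 1 := by
          calc exp (-1 * Y 1 ω) < exp 0 := exp_lt_exp.mpr h1
          _ = 1 := exp_zero
        simp only [Function.mem_support]
        intro hzero
        linarith [sub_eq_zero.mp hzero]
      have h1 : μ {ω | 0 < Y 1 ω ∧ Y 1 ω ≤ lam / n} = 1 := by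
        rw [← measure_univ (μ := μ)]
        refine measure_congr ?_
        rw [Filter.eventuallyEq_set]
        filter_upwards [hYbd 1] with ω hω
        simp [hω]
      calc (0:ℝ≥0∞) < 1 := by norm_num
      _ = μ {ω | 0 < Y 1 ω ∧ Y 1 ω ≤ lam / n} := h1.symm
      _ ≤ μ (Function.support fun ω => 1 - exp (-1 * Y 1 ω)) := measure_mono hsub
    have : ∫ ω, (1 - exp (-1 * Y 1 ω)) ∂μ = 1 - c := by
      rw [integral_sub (integrable_const 1) (hexp_int 1)]
      simp [hc_def, mgf]
    linarith [this ▸ hpos]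
  have hCher : ∀ m, (μ {ω | S m ω ≤ 1}).toReal ≤ exp 1 * c ^ m := by
    intro m
    -- Chernoff
    set Wm : Ω → ℝ := ∑ i ∈ Finset.Icc 1 m, Y i with hWm_def
    have hWm_apply : ∀ ω, Wm ω = W m ω := by
      intro ω; rw [hWm_def, hW_def]; simp [Finset.sum_apply]
    have hWm_meas : Measurable Wm := by
      have h0 : Measurable fun ω => ∑ i ∈ Finset.Icc 1 m, Y i ω :=
        Finset.measurable_sum _ fun i _ => hYmeas i
      have : Wm = fun ω => ∑ i ∈ Finset.Icc 1 m, Y i ω := by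
        funext ω; rw [hWm_def]; simp [Finset.sum_apply]
      rw [this]; exact h0
    have hWm_int : Integrable (fun ω => exp (-1 * Wm ω)) μ := by
      refine Integrable.mono' (integrable_const 1)
        ((hWm_meas.const_mul (-1)).exp.aestronglyMeasurable) ?_
      filter_upwards [hAE] with ω hω
      rw [Real.norm_eq_abs, abs_of_pos (exp_pos _)]
      have hWnn : 0 ≤ Wm ω := by
        rw [hWm_apply, hW_def]
        exact Finset.sum_nonneg fun k _ => (hω.1 k).1.le
      have : -1 * Wm ω ≤ 0 := by nlinarith
      calc exp (-1 * Wm ω) ≤ exp 0 := exp_le_exp.mpr this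
      _ = 1 := exp_zero
    have hmono : μ {ω | S m ω ≤ 1} ≤ μ {ω | Wm ω ≤ 1} := by
      refine measure_mono_ae ?_
      filter_upwards [hAE] with ω hω hS1
      have := hWS ω (fun i => (hω.1 i).1) m
      have hS1' : S m ω ≤ 1 := hS1
      show Wm ω ≤ 1
      rw [hWm_apply]
      exact le_trans this hS1'
    have hcher := measure_le_le_exp_mul_mgf (μ := μ) (X := Wm) 1 (by norm_num : (-1:ℝ) ≤ 0) hWm_int
    have hmgfWm : mgf Wm μ (-1) = c ^ m := by
      rw [hWm_def, iIndepFun.mgf_sum hYindep hYmeas]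
      rw [Finset.prod_congr rfl fun i _ => hmgf_eq i, Finset.prod_const, Nat.card_Icc]
      norm_num
    calc (μ {ω | S m ω ≤ 1}).toReal ≤ (μ {ω | Wm ω ≤ 1}).toReal :=
          ENNReal.toReal_mono (measure_ne_top _ _) hmono
    _ ≤ exp (-(-1) * 1) * mgf Wm μ (-1) := hcher
    _ = exp 1 * c ^ m := by rw [hmgfWm]; norm_num
  -- combined iff statement
  have hIFF : ∀ᵐ ω ∂μ, ∀ m, (S m ω ≤ 1 ↔ m ≤ M ω) := by
    filter_upwards [hAE] with ω hω
    exact hMiff ω (fun i => (hω.1 i).1) hω.2.1 hω.2.2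
  have hA_bd : ∀ m, μ {ω | S m ω ≤ 1} ≤ ENNReal.ofReal (exp 1 * c ^ m) := by
    intro m
    rw [← ENNReal.ofReal_toReal (measure_ne_top μ {ω | S m ω ≤ 1})]
    exact ENNReal.ofReal_le_ofReal (hCher m)
  have hS0 : ∀ ω, S 0 ω = 0 := by
    intro ω
    rw [hS 0 ω]
    simp
  have hint_gj : ∀ j, ∫ ω, (Set.indicator {ω' | S j ω' ≤ 1} (fun _ => (1:ℝ)) ω) * Y (j+1) ω ∂μ
      = (μ {ω' | S j ω' ≤ 1}).toReal * (1 / n) := by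
    intro j
    set A : Set Ω := {ω' | S j ω' ≤ 1} with hA_def
    have hAmeas : MeasurableSet A := (hSmeas j) measurableSet_Iic
    set I : Ω → ℝ := Set.indicator A (fun _ => (1:ℝ)) with hI_def
    have hImeas : Measurable I := measurable_const.indicator hAmeas
    -- independence of I and Y (j+1)
    have hindep : IndepFun I (Y (j+1)) μ := by
      have hdisj : Disjoint (Finset.Icc 1 j) ({j+1} : Finset ℕ) := by
        simp only [Finset.disjoint_left, Finset.mem_Icc, Finset.mem_singleton]
        omega
      have base := ProbabilityTheory.iIndepFun.indepFun_finset (Finset.Icc 1 j) {j+1}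
        hdisj hYindep hYmeas
      set F : ((Finset.Icc 1 j : Finset ℕ) → ℝ) → ℝ :=
        fun v => ∑ k : (Finset.Icc 1 j : Finset ℕ),
          (∑ i ∈ Finset.Icc (k:ℕ) j, ρ ^ (i - (k:ℕ))) * v k with hF_def
      have hFmeas : Measurable F := by
        apply Finset.measurable_sum
        intro k _
        exact (measurable_pi_apply k).const_mul _
      set φ : ((Finset.Icc 1 j : Finset ℕ) → ℝ) → ℝ :=
        fun v => Set.indicator (Set.Iic (1:ℝ)) (fun _ => (1:ℝ)) (F v) with hφ_def
      have hφmeas : Measurable φ :=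
        (measurable_const.indicator measurableSet_Iic).comp hFmeas
      set ψ : ((({j+1}) : Finset ℕ) → ℝ) → ℝ := fun v => v ⟨j+1, by simp⟩ with hψ_def
      have hψmeas : Measurable ψ := measurable_pi_apply _
      have hcomp := base.comp hφmeas hψmeas
      have heq1 : (φ ∘ fun a (i : (Finset.Icc 1 j : Finset ℕ)) => Y i a) = I := by
        funext ω
        have hFY : F (fun i : (Finset.Icc 1 j : Finset ℕ) => Y i ω) = S j ω := by
          rw [hF_def, hSform j ω]
          exact Finset.sum_coe_sort (Finset.Icc 1 j)
            (fun k => (∑ i ∈ Finset.Icc k j, ρ ^ (i - k)) * Y k ω)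
        simp only [Function.comp_apply, hφ_def, hFY, hI_def, hA_def]
        by_cases h : S j ω ≤ 1
        · rw [Set.indicator_of_mem (by exact h), Set.indicator_of_mem (by exact h)]
        · rw [Set.indicator_of_notMem (by exact h), Set.indicator_of_notMem (by exact h)]
      have heq2 : (ψ ∘ fun a (i : (({j+1}) : Finset ℕ)) => Y i a) = Y (j+1) := rfl
      rwa [heq1, heq2] at hcomp
    have hmul := IndepFun.integral_mul_eq_mul_integral hindep hImeas.aestronglyMeasurable
      (hYmeas (j+1)).aestronglyMeasurable
    have : ∫ ω, I ω * Y (j+1) ω ∂μ = ∫ ω, (I * Y (j+1)) ω ∂μ := rfl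
    rw [this, hmul]
    have hIint : ∫ ω, I ω ∂μ = (μ A).toReal := by
      rw [hI_def, integral_indicator_const (1:ℝ) hAmeas]
      simp [measureReal_def]
    rw [hIint, hYmean (j+1)]
  have hMint : ∫ ω, (M ω : ℝ) ∂μ = ∑' j, (μ {ω | S (j+1) ω ≤ 1}).toReal := by
    set f : ℕ → Ω → ℝ := fun j => Set.indicator {ω | j + 1 ≤ M ω} (fun _ => (1:ℝ))
      with hf_def
    have hsetmeas : ∀ j : ℕ, MeasurableSet {ω | j + 1 ≤ M ω} := by
      intro j
      have : {ω | j + 1 ≤ M ω} = M ⁻¹' Set.Ici (j+1) := rfl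
      rw [this]
      exact hMmeas measurableSet_Ici
    have hfmeas : ∀ j, Measurable (f j) :=
      fun j => measurable_const.indicator (hsetmeas j)
    have hrepr : ∀ ω, (M ω : ℝ) = ∑' j, f j ω := by
      intro ω
      have h1 : ∀ j, f j ω = if j < M ω then (1:ℝ) else 0 := by
        intro j
        rw [hf_def]
        simp only [Set.indicator_apply, Set.mem_setOf_eq, Nat.lt_iff_add_one_le]
      calc (M ω : ℝ) = ∑ j ∈ Finset.range (M ω), (1:ℝ) := by simp
      _ = ∑' j, (if j < M ω then (1:ℝ) else 0) := (helper_tsum_ite (M ω) (fun _ => 1)).symm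
      _ = ∑' j, f j ω := by exact tsum_congr fun j => (h1 j).symm
    have hμeq : ∀ j : ℕ, μ {ω | j + 1 ≤ M ω} = μ {ω | S (j+1) ω ≤ 1} := by
      intro j
      refine (measure_congr ?_).symm
      rw [Filter.eventuallyEq_set]
      filter_upwards [hIFF] with ω h
      exact h (j+1)
    have hf_lint : ∀ j, ∫⁻ ω, ‖f j ω‖₊ ∂μ = μ {ω | j + 1 ≤ M ω} := by
      intro j
      have h1 : (fun ω => (‖f j ω‖₊ : ℝ≥0∞))
          = Set.indicator {ω | j + 1 ≤ M ω} (fun _ => (1:ℝ≥0∞)) := by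
        funext ω
        by_cases h : ω ∈ {ω | j + 1 ≤ M ω}
        · rw [Set.indicator_of_mem h]
          rw [hf_def]; simp only [Set.indicator_of_mem h]; simp
        · rw [Set.indicator_of_notMem h]
          rw [hf_def]; simp only [Set.indicator_of_notMem h]; simp
      rw [h1]
      exact lintegral_indicator_one (hsetmeas j)
    have hsum_ne_top : ∑' j, ∫⁻ ω, ‖f j ω‖₊ ∂μ ≠ ⊤ := by
      have hb : ∀ j : ℕ, ∫⁻ ω, ‖f j ω‖₊ ∂μ ≤ ENNReal.ofReal ((exp 1 * c) * c ^ j) := by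
        intro j
        rw [hf_lint j, hμeq j]
        refine (hA_bd (j+1)).trans_eq ?_
        rw [pow_succ]
        ring_nf
      refine ne_top_of_le_ne_top ?_ (ENNReal.tsum_le_tsum hb)
      rw [← ENNReal.ofReal_tsum_of_nonneg
        (fun j => mul_nonneg (mul_nonneg (exp_pos 1).le hc0) (pow_nonneg hc0 j))
        ((summable_geometric_of_lt_one hc0 hc1).mul_left _)]
      exact ENNReal.ofReal_ne_top
    have hint_f : ∀ j, ∫ ω, f j ω ∂μ = (μ {ω | S (j+1) ω ≤ 1}).toReal := by
      intro j
      rw [hf_def]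
      rw [integral_indicator_const (1:ℝ) (hsetmeas j)]
      rw [measureReal_def, hμeq j]
      simp
    calc ∫ ω, (M ω : ℝ) ∂μ = ∫ ω, ∑' j, f j ω ∂μ := by
          exact integral_congr_ae (Filter.Eventually.of_forall hrepr)
    _ = ∑' j, ∫ ω, f j ω ∂μ :=
          integral_tsum (fun j => (hfmeas j).aestronglyMeasurable) hsum_ne_top
    _ = ∑' j, (μ {ω | S (j+1) ω ≤ 1}).toReal := tsum_congr hint_f
  set A : ℕ → Set Ω := fun j => {ω | S j ω ≤ 1} with hA_def
  have hAmeas : ∀ j, MeasurableSet (A j) := fun j => (hSmeas j) measurableSet_Iic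
  set g : ℕ → Ω → ℝ :=
    fun j ω => Set.indicator (A j) (fun _ => (1:ℝ)) ω * Y (j+1) ω with hg_def
  have hg_meas : ∀ j, Measurable (g j) :=
    fun j => (measurable_const.indicator (hAmeas j)).mul (hYmeas (j+1))
  set Z : Ω → ℝ := fun ω => W (M ω + 1) ω with hZ_def
  -- pointwise identity for g
  have hg_point : ∀ ω, (∀ m, (S m ω ≤ 1 ↔ m ≤ M ω)) →
      ∀ j, g j ω = if j < M ω + 1 then Y (j+1) ω else 0 := by
    intro ω hiff j
    rw [hg_def]
    simp only [Set.indicator_apply, hA_def, Set.mem_setOf_eq, hiff j, ite_mul, one_mul,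
      zero_mul]
    exact if_congr (by omega) rfl rfl
  have hW_sum : ∀ ω N, W (N + 1) ω = ∑ j ∈ Finset.range (N + 1), Y (j + 1) ω := by
    intro ω N
    rw [hW_def]
    show (∑ k ∈ Finset.Icc 1 (N+1), Y k ω) = _
    rw [← Finset.Ico_add_one_right_eq_Icc, Finset.sum_Ico_eq_sum_range]
    have he : N + 1 + 1 - 1 = N + 1 := by omega
    rw [he]
    exact Finset.sum_congr rfl fun j _ => by rw [Nat.add_comm 1 j]
  -- a.e. representation of Z as a tsum
  have hZrepr : ∀ᵐ ω ∂μ, Z ω = ∑' j, g j ω := by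
    filter_upwards [hIFF] with ω hiff
    rw [hZ_def]
    show W (M ω + 1) ω = _
    rw [hW_sum ω (M ω)]
    rw [tsum_congr (fun j => hg_point ω hiff j), helper_tsum_ite]
  -- lintegral bound for g j
  have hg_lint_bd : ∀ j, ∫⁻ ω, ‖g j ω‖₊ ∂μ ≤ ENNReal.ofReal (lam / n) * μ (A j) := by
    intro j
    have hbd : ∀ᵐ ω ∂μ, (‖g j ω‖₊ : ℝ≥0∞)
        ≤ Set.indicator (A j) (fun _ => ENNReal.ofReal (lam / n)) ω := by
      filter_upwards [hYbd (j+1)] with ω hω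
      by_cases h : ω ∈ A j
      · rw [Set.indicator_of_mem h]
        rw [hg_def]
        simp only [Set.indicator_of_mem h, one_mul]
        rw [← enorm_eq_nnnorm, Real.enorm_eq_ofReal hω.1.le]
        exact ENNReal.ofReal_le_ofReal hω.2
      · rw [Set.indicator_of_notMem h, hg_def]
        simp [Set.indicator_of_notMem h]
    calc ∫⁻ ω, ‖g j ω‖₊ ∂μ
        ≤ ∫⁻ ω, Set.indicator (A j) (fun _ => ENNReal.ofReal (lam / n)) ω ∂μ :=
          lintegral_mono_ae hbd
    _ = ENNReal.ofReal (lam / n) * μ (A j) := by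
        rw [lintegral_indicator (hAmeas j), setLIntegral_const]
  have hgeo_sum : (∑' j : ℕ, ENNReal.ofReal (exp 1 * c ^ j)) ≠ ⊤ := by
    rw [← ENNReal.ofReal_tsum_of_nonneg
      (fun j => mul_nonneg (exp_pos 1).le (pow_nonneg hc0 j))
      ((summable_geometric_of_lt_one hc0 hc1).mul_left _)]
    exact ENNReal.ofReal_ne_top
  have hg_sum_ne_top : (∑' j, ∫⁻ ω, ‖g j ω‖₊ ∂μ) ≠ ⊤ := by
    have hb : ∀ j : ℕ, ∫⁻ ω, ‖g j ω‖₊ ∂μ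
        ≤ ENNReal.ofReal (lam / n) * ENNReal.ofReal (exp 1 * c ^ j) := by
      intro j
      exact (hg_lint_bd j).trans (mul_le_mul_right (hA_bd j) _)
    refine ne_top_of_le_ne_top ?_ (ENNReal.tsum_le_tsum hb)
    rw [ENNReal.tsum_mul_left]
    exact ENNReal.mul_ne_top ENNReal.ofReal_ne_top hgeo_sum
  -- Z is integrable
  have hZint : Integrable Z μ := by
    refine ⟨hZmeas.aestronglyMeasurable, ?_⟩
    show (∫⁻ ω, (‖Z ω‖₊ : ℝ≥0∞) ∂μ) < ⊤
    have hZnorm : ∀ᵐ ω ∂μ, (‖Z ω‖₊ : ℝ≥0∞) = ∑' j, (‖g j ω‖₊ : ℝ≥0∞) := by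
      filter_upwards [hIFF, hZrepr, ae_all_iff.2 hYbd] with ω hiff hrep hY
      have h1 : ∀ j, (‖g j ω‖₊ : ℝ≥0∞)
          = if j < M ω + 1 then ENNReal.ofReal (Y (j+1) ω) else 0 := by
        intro j
        rw [hg_point ω hiff j]
        by_cases h : j < M ω + 1
        · rw [if_pos h, if_pos h, ← enorm_eq_nnnorm, Real.enorm_eq_ofReal (hY (j+1)).1.le]
        · rw [if_neg h, if_neg h]; simp
      rw [tsum_congr h1, tsum_eq_sum (s := Finset.range (M ω + 1))
        (fun j hj => if_neg (by simpa using hj))]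
      rw [Finset.sum_congr rfl (fun j hj => if_pos (Finset.mem_range.mp hj))]
      rw [hrep, tsum_congr (fun j => hg_point ω hiff j), helper_tsum_ite]
      rw [← enorm_eq_nnnorm, Real.enorm_eq_ofReal (Finset.sum_nonneg fun j _ => (hY (j+1)).1.le)]
      exact ENNReal.ofReal_sum_of_nonneg fun j _ => (hY (j+1)).1.le
    rw [lintegral_congr_ae hZnorm, lintegral_tsum
      (fun j => ((hg_meas j).nnnorm.coe_nnreal_ennreal).aemeasurable)]
    exact lt_top_iff_ne_top.mpr hg_sum_ne_top
  -- integral of Z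
  have hZint_eq : ∫ ω, Z ω ∂μ = ∑' j, ∫ ω, g j ω ∂μ := by
    rw [integral_congr_ae hZrepr]
    exact integral_tsum (fun j => (hg_meas j).aestronglyMeasurable) hg_sum_ne_top
  -- compare T with Z
  have hT0 : 0 ≤ᵐ[μ] fun ω => S (M ω + 1) ω := by
    filter_upwards [hAE] with ω hω
    have := hω.2.2
    simp only [Pi.zero_apply]
    linarith
  have hTZ : (fun ω => S (M ω + 1) ω) ≤ᵐ[μ] fun ω => (1 - ρ)⁻¹ * Z ω := by
    filter_upwards [hAE] with ω hω
    exact hSW ω (fun i => (hω.1 i).1) (M ω + 1)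
  have hmain : ∫ ω, S (M ω + 1) ω ∂μ ≤ (1 - ρ)⁻¹ * ∫ ω, Z ω ∂μ := by
    rw [← integral_const_mul]
    exact integral_mono_of_nonneg hT0 (hZint.const_mul _) hTZ
  -- sum of integrals of g
  have hAsummable : Summable (fun j => (μ (A j)).toReal) :=
    Summable.of_nonneg_of_le (fun j => ENNReal.toReal_nonneg) (fun j => hCher j)
      ((summable_geometric_of_lt_one hc0 hc1).mul_left _)
  have hA0 : (μ (A 0)).toReal = 1 := by
    have : A 0 = Set.univ := by
      ext ω; simp [hA_def, hS0 ω]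
    rw [this]
    simp
  have hsum_g : ∑' j, ∫ ω, g j ω ∂μ = ((∫ ω, (M ω : ℝ) ∂μ) + 1) * (1 / n) := by
    have h1 : ∀ j, ∫ ω, g j ω ∂μ = (μ (A j)).toReal * (1 / n) := fun j => hint_gj j
    rw [tsum_congr h1, tsum_mul_right]
    congr 1
    rw [Summable.tsum_eq_zero_add hAsummable, hA0, hMint]
    ring
  rw [hZint_eq] at hmain
  rw [hsum_g] at hmain
  refine hmain.trans_eq ?_
  rw [one_div, div_eq_mul_inv, mul_inv]
  ring
end

section
/- The expected number of samples taken over the interval [0,1] obeys the two-sided bound n(1 − ρ) − 1 ≤ E[M] ≤ n + λ/(1 − ρ) − 1. -/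
open MeasureTheory ProbabilityTheory Real
open scoped ENNReal NNReal

set_option maxHeartbeats 1000000 in
theorem stmt_6
    {Ω : Type*} [MeasurableSpace Ω] (μ : Measure Ω) [IsProbabilityMeasure μ]
    (ρ lam : ℝ) (n : ℕ)
    (hρ0 : 0 ≤ ρ) (hρ1 : ρ < 1) (hlam : 1 < lam) (hn : 0 < n)
    (Y X S : ℕ → Ω → ℝ) (M : Ω → ℕ)
    (hYmeas : ∀ i, Measurable (Y i))
    (hYindep : iIndepFun (m := fun _ : ℕ => (inferInstance : MeasurableSpace ℝ)) Y μ)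
    (hYident : ∀ i, IdentDistrib (Y i) (Y 1) μ μ)
    (hYbd : ∀ i, ∀ᵐ ω ∂μ, 0 < Y i ω ∧ Y i ω ≤ lam / n)
    (hYmean : ∀ i, ∫ ω, Y i ω ∂μ = 1 / n)
    (hX1 : ∀ ω, X 1 ω = Y 1 ω)
    (hXrec : ∀ i, 2 ≤ i → ∀ ω, X i ω = ρ * X (i - 1) ω + Y i ω)
    (hS : ∀ m ω, S m ω = ∑ i ∈ Finset.Icc 1 m, X i ω)
    (hMmeas : Measurable M)
    (hM : ∀ᵐ ω ∂μ, S (M ω) ω ≤ 1 ∧ 1 < S (M ω + 1) ω) :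
    (n : ℝ) * (1 - ρ) - 1 ≤ ∫ ω, (M ω : ℝ) ∂μ ∧
    ∫ ω, (M ω : ℝ) ∂μ ≤ (n : ℝ) + lam / (1 - ρ) - 1 := by
  classical
  have hn' : (0:ℝ) < n := Nat.cast_pos.mpr hn
  have h1ρ : (0:ℝ) < 1 - ρ := by linarith
  have hlam0 : (0:ℝ) < lam := by linarith
  set c : ℝ := lam / (n * (1 - ρ)) with hc
  have hc0 : 0 < c := by positivity
  have hkey : (1 - ρ) * c = lam / n := by
    rw [hc]; field_simp
  set B : ℝ := (1 - ρ) + c with hB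
  have hB0 : 0 < B := by positivity
  -- explicit form of X
  have hXform : ∀ i, ∀ ω, X (i+1) ω = ∑ k ∈ Finset.Icc 1 (i+1), ρ^(i+1-k) * Y k ω := by
    intro i
    induction i with
    | zero => intro ω; simp [hX1 ω]
    | succ i ih =>
      intro ω
      have h1 : (2:ℕ) ≤ i + 1 + 1 := by omega
      rw [hXrec (i+1+1) h1 ω]
      have h2 : i + 1 + 1 - 1 = i + 1 := by omega
      rw [h2, ih ω, Finset.mul_sum,
        Finset.sum_Icc_succ_top (by omega : (1:ℕ) ≤ i + 1 + 1)]
      have h3 : ∀ k ∈ Finset.Icc 1 (i+1), ρ * (ρ^(i+1-k) * Y k ω) = ρ^(i+1+1-k) * Y k ω := by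
        intro k hk
        have hk' : k ≤ i + 1 := (Finset.mem_Icc.mp hk).2
        rw [← mul_assoc, ← pow_succ']
        congr 2
        omega
      rw [Finset.sum_congr rfl h3]
      simp
  -- linear form of S
  have hSlin : ∀ m ω, S m ω
      = ∑ k ∈ Finset.Icc 1 m, (∑ i ∈ Finset.Icc k m, ρ^(i-k)) * Y k ω := by
    intro m ω
    rw [hS]
    have h1 : ∀ i ∈ Finset.Icc 1 m, X i ω = ∑ k ∈ Finset.Icc 1 i, ρ^(i-k) * Y k ω := by
      intro i hi
      obtain ⟨j, rfl⟩ : ∃ j, i = j + 1 := ⟨i - 1, by have := (Finset.mem_Icc.mp hi).1; omega⟩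
      exact hXform j ω
    rw [Finset.sum_congr rfl h1]
    rw [Finset.sum_comm' (t' := Finset.Icc 1 m) (s' := fun k => Finset.Icc k m)
      (by intro x y; simp only [Finset.mem_Icc]; omega)]
    apply Finset.sum_congr rfl
    intro k _
    rw [Finset.sum_mul]
  have hSmeas : ∀ m, Measurable (S m) := by
    intro m
    have : S m = fun ω => ∑ k ∈ Finset.Icc 1 m, (∑ i ∈ Finset.Icc k m, ρ^(i-k)) * Y k ω :=
      funext (hSlin m)
    rw [this]
    exact Finset.measurable_sum _ fun k _ => (hYmeas k).const_mul _
  have hS0 : ∀ ω, S 0 ω = 0 := by intro ω; simp [hS]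
  have hSsucc : ∀ m ω, S (m+1) ω = S m ω + X (m+1) ω := by
    intro m ω
    rw [hS, hS, Finset.sum_Icc_succ_top (by omega : (1:ℕ) ≤ m + 1)]
  -- the W identity
  have hWid : ∀ m ω, ∑ j ∈ Finset.Icc 1 (m+1), Y j ω
      = (1-ρ) * S (m+1) ω + ρ * X (m+1) ω := by
    intro m
    induction m with
    | zero =>
      intro ω
      simp only [Finset.Icc_self, Finset.sum_singleton]
      rw [hS]
      simp only [Finset.Icc_self, Finset.sum_singleton, hX1]
      ring
    | succ m ih =>
      intro ω
      rw [Finset.sum_Icc_succ_top (by omega : (1:ℕ) ≤ m + 1 + 1), ih ω,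
        hSsucc (m+1) ω, hXrec (m+1+1) (by omega) ω]
      have h2 : m + 1 + 1 - 1 = m + 1 := by omega
      rw [h2]
      ring
  -- φ : indicator of Iic 1
  set φ : ℝ → ℝ := Set.indicator (Set.Iic (1:ℝ)) (fun _ => (1:ℝ)) with hφ
  have hφmeas : Measurable φ := measurable_const.indicator measurableSet_Iic
  have hφval : ∀ x : ℝ, φ x = if x ≤ 1 then 1 else 0 := by
    intro x; simp [hφ, Set.indicator_apply, Set.mem_Iic]
  have hφbd : ∀ x : ℝ, ‖φ x‖ ≤ 1 := by
    intro x; rw [hφval]; split <;> simp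
  -- integrability of Y
  have hYint : ∀ j, Integrable (Y j) μ := by
    intro j
    refine Integrable.mono' (integrable_const (lam / n)) (hYmeas j).aestronglyMeasurable ?_
    filter_upwards [hYbd j] with ω hω
    rw [Real.norm_eq_abs, abs_of_pos hω.1]
    exact hω.2
  -- independence of S m and Y (m+1)
  have hSindep : ∀ m, IndepFun (S m) (Y (m+1)) μ := by
    intro m
    set d : ℕ → ℝ := fun k => if k ≤ m then (∑ i ∈ Finset.Icc k m, ρ^(i-k)) else 1 with hd
    have hZ : iIndepFun (m := fun _ : ℕ => (inferInstance : MeasurableSpace ℝ))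
        (fun k => (fun x => d k * x) ∘ Y k) μ :=
      hYindep.comp _ (fun k => measurable_id.const_mul (d k))
    have h1 : IndepFun (∑ k ∈ Finset.Icc 1 m, (fun x => d k * x) ∘ Y k)
        ((fun x => d (m+1) * x) ∘ Y (m+1)) μ :=
      hZ.indepFun_finsetSum_of_notMem
        (fun k => (hYmeas k).const_mul _) (by simp)
    have e1 : (∑ k ∈ Finset.Icc 1 m, (fun x => d k * x) ∘ Y k) = S m := by
      funext ω
      rw [Finset.sum_apply, hSlin m ω]
      apply Finset.sum_congr rfl
      intro k hk
      have hk' : k ≤ m := (Finset.mem_Icc.mp hk).2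
      simp [hd, hk']
    have e2 : ((fun x => d (m+1) * x) ∘ Y (m+1)) = Y (m+1) := by
      funext ω
      simp [hd]
    rw [e1, e2] at h1
    exact h1
  have hBset : ∀ m, MeasurableSet {ω | S m ω ≤ 1} :=
    fun m => measurableSet_le (hSmeas m) measurable_const
  have hφint : ∀ m, ∫ ω, φ (S m ω) ∂μ = (μ {ω | S m ω ≤ 1}).toReal := by
    intro m
    have e : (fun ω => φ (S m ω)) = Set.indicator {ω | S m ω ≤ 1} (fun _ => (1:ℝ)) := by
      funext ω
      rw [hφval]
      simp [Set.indicator_apply, Set.mem_setOf_eq]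
    rw [e, integral_indicator_const (1:ℝ) (hBset m)]
    simp [measureReal_def]
  -- Wald single term
  have hterm : ∀ m, ∫ ω, φ (S m ω) * Y (m+1) ω ∂μ
      = (μ {ω | S m ω ≤ 1}).toReal * (1/n) := by
    intro m
    have hind : IndepFun (fun ω => φ (S m ω)) (Y (m+1)) μ :=
      (hSindep m).comp hφmeas measurable_id
    have h1 : ∫ ω, φ (S m ω) * Y (m+1) ω ∂μ = (∫ ω, φ (S m ω) ∂μ) * ∫ ω, Y (m+1) ω ∂μ :=
      hind.integral_mul_eq_mul_integral
      ((hφmeas.comp (hSmeas m)).aestronglyMeasurable)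
      ((hYmeas (m+1)).aestronglyMeasurable)
    rw [h1, hφint m, hYmean (m+1)]
  -- the truncated sum F
  set F : ℕ → Ω → ℝ := fun K ω => ∑ j ∈ Finset.Icc 1 K, φ (S (j-1) ω) * Y j ω with hFdef
  have hFmeas : ∀ K, Measurable (F K) :=
    fun K => Finset.measurable_sum _ fun j _ => ((hφmeas.comp (hSmeas (j-1))).mul (hYmeas j))
  have hFint' : ∀ j : ℕ, Integrable (fun ω => φ (S (j-1) ω) * Y j ω) μ := by
    intro j
    exact (hYint j).bdd_mul ((hφmeas.comp (hSmeas (j-1))).aestronglyMeasurable)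
      (ae_of_all _ fun ω => hφbd _)
  have hFint : ∀ K, Integrable (F K) μ := by
    intro K
    exact integrable_finset_sum _ (fun j _ => hFint' j)
  have hFval : ∀ K, ∫ ω, F K ω ∂μ
      = ∑ j ∈ Finset.Icc 1 K, (μ {ω | S (j-1) ω ≤ 1}).toReal * (1/n) := by
    intro K
    rw [hFdef]
    rw [integral_finset_sum _ (fun j _ => hFint' j)]
    apply Finset.sum_congr rfl
    intro j hj
    obtain ⟨i, rfl⟩ : ∃ i, j = i + 1 := ⟨j - 1, by have := (Finset.mem_Icc.mp hj).1; omega⟩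
    have h1 : i + 1 - 1 = i := by omega
    rw [h1]
    exact hterm i
  -- filter/cardinality helper
  have hmincard : ∀ (t K : ℕ),
      (Finset.Icc 1 K).filter (fun j => j ≤ t + 1) = Finset.Icc 1 (min (t+1) K) := by
    intro t K
    ext j
    simp only [Finset.mem_filter, Finset.mem_Icc]
    omega
  -- pointwise value of the truncated count
  have hgpt : ∀ (K : ℕ) (ω : Ω), ((min (M ω + 1) K : ℕ) : ℝ)
      = ∑ j ∈ Finset.Icc 1 K, Set.indicator {ω' | j - 1 ≤ M ω'} (fun _ => (1:ℝ)) ω := by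
    intro K ω
    have h1 : ∀ j ∈ Finset.Icc 1 K,
        Set.indicator {ω' | j - 1 ≤ M ω'} (fun _ => (1:ℝ)) ω
          = if j ≤ M ω + 1 then (1:ℝ) else 0 := by
      intro j _
      simp only [Set.indicator_apply, Set.mem_setOf_eq]
      exact if_congr (by omega) rfl rfl
    rw [Finset.sum_congr rfl h1, ← Finset.sum_filter, hmincard (M ω) K]
    rw [Finset.sum_const, Nat.card_Icc]
    simp
  have hMset : ∀ t : ℕ, MeasurableSet {ω | t ≤ M ω} := by
    intro t
    exact hMmeas MeasurableSet.of_discrete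

  -- the limit function
  set WT : Ω → ℝ := fun ω => ∑ j ∈ Finset.Icc 1 (M ω + 1), Y j ω with hWTdef
  -- pointwise facts on an almost sure set
  have hptall : ∀ᵐ ω ∂μ,
      (∀ t : ℕ, t ≤ M ω ↔ S t ω ≤ 1)
      ∧ (∀ K, F K ω = ∑ j ∈ Finset.Icc 1 (min (M ω + 1) K), Y j ω)
      ∧ (Monotone fun K => F K ω)
      ∧ Filter.Tendsto (fun K => F K ω) Filter.atTop (nhds (WT ω))
      ∧ (∀ K, 0 ≤ F K ω ∧ F K ω ≤ B)
      ∧ (1 - ρ < WT ω ∧ WT ω ≤ B) := by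
    filter_upwards [MeasureTheory.ae_all_iff.mpr hYbd, hM] with ω hY hMω
    obtain ⟨hS1, hS2⟩ := hMω
    have hXpos : ∀ i, 0 < X (i+1) ω := by
      intro i
      induction i with
      | zero => rw [hX1]; exact (hY 1).1
      | succ i ih =>
        rw [hXrec (i+1+1) (by omega) ω]
        have h2 : i+1+1-1 = i+1 := by omega
        rw [h2]
        have h3 := mul_nonneg hρ0 ih.le
        have h4 := (hY (i+1+1)).1
        linarith
    have hlc : lam / ↑n ≤ c := by nlinarith [hkey, mul_nonneg hρ0 hc0.le]
    have hXbd : ∀ i, X (i+1) ω ≤ c := by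
      intro i
      induction i with
      | zero => rw [hX1]; exact le_trans (hY 1).2 hlc
      | succ i ih =>
        rw [hXrec (i+1+1) (by omega) ω]
        have h2 : i+1+1-1 = i+1 := by omega
        rw [h2]
        have h3 := (hY (i+1+1)).2
        have h4 := mul_le_mul_of_nonneg_left ih hρ0
        nlinarith [hkey]
    have hSmono : ∀ a b : ℕ, a ≤ b → S a ω ≤ S b ω := by
      intro a b hab
      rw [hS, hS]
      apply Finset.sum_le_sum_of_subset_of_nonneg (Finset.Icc_subset_Icc_right hab)
      intro i hi _
      obtain ⟨j, rfl⟩ : ∃ k, i = k + 1 := ⟨i - 1, by have := (Finset.mem_Icc.mp hi).1; omega⟩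
      exact (hXpos j).le
    have hMiff : ∀ t : ℕ, t ≤ M ω ↔ S t ω ≤ 1 := by
      intro t
      constructor
      · intro h
        exact le_trans (hSmono t (M ω) h) hS1
      · intro h
        by_contra hlt
        push_neg at hlt
        have h5 := hSmono (M ω + 1) t (by omega)
        linarith
    have hWmono : ∀ a b : ℕ, a ≤ b →
        (∑ j ∈ Finset.Icc 1 a, Y j ω) ≤ ∑ j ∈ Finset.Icc 1 b, Y j ω := by
      intro a b hab
      apply Finset.sum_le_sum_of_subset_of_nonneg (Finset.Icc_subset_Icc_right hab)
      intro i _ _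
      exact (hY i).1.le
    have hFeq : ∀ K, F K ω = ∑ j ∈ Finset.Icc 1 (min (M ω + 1) K), Y j ω := by
      intro K
      have h1 : ∀ j ∈ Finset.Icc 1 K,
          φ (S (j-1) ω) * Y j ω = if j ≤ M ω + 1 then Y j ω else 0 := by
        intro j _
        have hcond : S (j-1) ω ≤ 1 ↔ j ≤ M ω + 1 := by
          rw [← hMiff (j-1)]
          omega
        rw [hφval]
        by_cases h : j ≤ M ω + 1
        · rw [if_pos h, if_pos (hcond.mpr h), one_mul]
        · rw [if_neg h, if_neg (fun hh => h (hcond.mp hh)), zero_mul]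
      show (∑ j ∈ Finset.Icc 1 K, φ (S (j-1) ω) * Y j ω) = _
      rw [Finset.sum_congr rfl h1, ← Finset.sum_filter, hmincard (M ω) K]
    have hWTub : WT ω ≤ B := by
      have e := hWid (M ω) ω
      rw [hSsucc (M ω) ω] at e
      have h3 := hXbd (M ω)
      have h4 : (1-ρ) * S (M ω) ω ≤ (1-ρ) * 1 := mul_le_mul_of_nonneg_left hS1 h1ρ.le
      show (∑ j ∈ Finset.Icc 1 (M ω + 1), Y j ω) ≤ B
      nlinarith [e, h3, h4, hB]
    have hWTlb : 1 - ρ < WT ω := by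
      have e := hWid (M ω) ω
      have h5 : (1-ρ) * 1 < (1-ρ) * S (M ω + 1) ω := mul_lt_mul_of_pos_left hS2 h1ρ
      have h6 := mul_nonneg hρ0 (hXpos (M ω)).le
      show (1:ℝ) - ρ < ∑ j ∈ Finset.Icc 1 (M ω + 1), Y j ω
      nlinarith [e, h5, h6]
    have hFbd : ∀ K, 0 ≤ F K ω ∧ F K ω ≤ B := by
      intro K
      constructor
      · rw [hFeq K]
        exact Finset.sum_nonneg fun j _ => (hY j).1.le
      · rw [hFeq K]
        exact le_trans (hWmono _ _ (min_le_left _ _)) hWTub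
    have hFmono : Monotone fun K => F K ω := by
      intro a b hab
      simp only
      rw [hFeq a, hFeq b]
      exact hWmono _ _ (min_le_min le_rfl hab)
    have htend : Filter.Tendsto (fun K => F K ω) Filter.atTop (nhds (WT ω)) := by
      apply Filter.Tendsto.congr' _ tendsto_const_nhds
      filter_upwards [Filter.eventually_ge_atTop (M ω + 1)] with K hK
      rw [hFeq K, min_eq_left hK]
    exact ⟨hMiff, hFeq, hFmono, htend, hFbd, hWTlb, hWTub⟩
  have haeset : ∀ t : ℕ, μ {ω | t ≤ M ω} = μ {ω | S t ω ≤ 1} := by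
    intro t
    apply measure_congr
    rw [Filter.eventuallyEq_set]
    filter_upwards [hptall] with ω hω
    exact hω.1 t
  have hgint : ∀ K : ℕ, Integrable (fun ω => ((min (M ω + 1) K : ℕ) : ℝ)) μ := by
    intro K
    refine Integrable.mono' (integrable_const (K:ℝ)) ?_ (ae_of_all _ fun ω => ?_)
    · exact (Measurable.comp
        (Measurable.of_discrete (f := fun t : ℕ => ((min (t + 1) K : ℕ) : ℝ))) hMmeas
        ).aestronglyMeasurable
    · rw [Real.norm_eq_abs, abs_of_nonneg (by positivity)]
      exact_mod_cast min_le_right (M ω + 1) K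
  have hgval : ∀ K : ℕ, ∫ ω, ((min (M ω + 1) K : ℕ) : ℝ) ∂μ
      = ∑ j ∈ Finset.Icc 1 K, (μ {ω | j - 1 ≤ M ω}).toReal := by
    intro K
    have hind : ∀ j : ℕ, Integrable (Set.indicator {ω' | j - 1 ≤ M ω'} (fun _ => (1:ℝ))) μ :=
      fun j => (integrable_const (1:ℝ)).indicator (hMset (j-1))
    have e : (fun ω => ((min (M ω + 1) K : ℕ) : ℝ))
        = fun ω => ∑ j ∈ Finset.Icc 1 K,
            Set.indicator {ω' | j - 1 ≤ M ω'} (fun _ => (1:ℝ)) ω :=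
      funext (fun ω => hgpt K ω)
    rw [e, integral_finset_sum _ (fun j _ => hind j)]
    apply Finset.sum_congr rfl
    intro j _
    rw [integral_indicator_const (1:ℝ) (hMset (j-1))]
    simp [measureReal_def]
  have hFub : ∀ K, ∫ ω, F K ω ∂μ ≤ B := by
    intro K
    have h1 : ∀ᵐ ω ∂μ, F K ω ≤ B := by
      filter_upwards [hptall] with ω hω
      exact (hω.2.2.2.2.1 K).2
    calc ∫ ω, F K ω ∂μ ≤ ∫ _ω, B ∂μ := integral_mono_ae (hFint K) (integrable_const B) h1
    _ = B := by simp
  have hg_eq : ∀ K : ℕ, ∫ ω, ((min (M ω + 1) K : ℕ) : ℝ) ∂μ = (n:ℝ) * ∫ ω, F K ω ∂μ := by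
    intro K
    rw [hgval K, hFval K, Finset.mul_sum]
    apply Finset.sum_congr rfl
    intro j _
    rw [haeset (j-1)]
    field_simp
  have hgub : ∀ K : ℕ, ∫ ω, ((min (M ω + 1) K : ℕ) : ℝ) ∂μ ≤ (n:ℝ) * B := by
    intro K
    rw [hg_eq K]
    exact mul_le_mul_of_nonneg_left (hFub K) hn'.le
  -- integrability of M
  have hMRmeas : Measurable (fun ω => (M ω : ℝ)) :=
    Measurable.comp (Measurable.of_discrete (f := fun t : ℕ => (t:ℝ))) hMmeas
  have hlin : ∫⁻ ω, ((M ω + 1 : ℕ) : ℝ≥0∞) ∂μ ≤ ENNReal.ofReal ((n:ℝ) * B) := by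
    have hsup : ∀ ω, (⨆ K : ℕ, ((min (M ω + 1) K : ℕ) : ℝ≥0∞)) = ((M ω + 1 : ℕ) : ℝ≥0∞) := by
      intro ω
      apply le_antisymm
      · exact iSup_le fun K => Nat.cast_le.mpr (min_le_left _ _)
      · have h1 := le_iSup (fun K : ℕ => ((min (M ω + 1) K : ℕ) : ℝ≥0∞)) (M ω + 1)
        simpa using h1
    have hmeasK : ∀ K : ℕ, Measurable (fun ω => ((min (M ω + 1) K : ℕ) : ℝ≥0∞)) :=
      fun K => (Measurable.of_discrete
        (f := fun t : ℕ => ((min (t + 1) K : ℕ) : ℝ≥0∞))).comp hMmeas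
    have hmono : Monotone (fun K : ℕ => fun ω => ((min (M ω + 1) K : ℕ) : ℝ≥0∞)) := by
      intro a b hab ω
      exact Nat.cast_le.mpr (min_le_min le_rfl hab)
    calc ∫⁻ ω, ((M ω + 1 : ℕ) : ℝ≥0∞) ∂μ
        = ∫⁻ ω, ⨆ K : ℕ, ((min (M ω + 1) K : ℕ) : ℝ≥0∞) ∂μ :=
          lintegral_congr fun ω => (hsup ω).symm
      _ = ⨆ K : ℕ, ∫⁻ ω, ((min (M ω + 1) K : ℕ) : ℝ≥0∞) ∂μ := lintegral_iSup hmeasK hmono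
      _ ≤ ENNReal.ofReal ((n:ℝ) * B) := by
          apply iSup_le
          intro K
          have h2 : ∫⁻ ω, ((min (M ω + 1) K : ℕ) : ℝ≥0∞) ∂μ
              = ENNReal.ofReal (∫ ω, ((min (M ω + 1) K : ℕ) : ℝ) ∂μ) := by
            rw [ofReal_integral_eq_lintegral_ofReal (hgint K)
              (ae_of_all _ fun ω => by positivity)]
            exact lintegral_congr fun ω => (ENNReal.ofReal_natCast _).symm
          rw [h2]
          exact ENNReal.ofReal_le_ofReal (hgub K)
  have hMint : Integrable (fun ω => (M ω : ℝ)) μ := by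
    refine ⟨hMRmeas.aestronglyMeasurable, ?_⟩
    apply lt_of_le_of_lt (le_trans (lintegral_mono ?_) hlin) ENNReal.ofReal_lt_top
    intro ω
    have h1 : (‖(M ω : ℝ)‖₊ : ℝ≥0∞) ≤ ((M ω + 1 : ℕ) : ℝ≥0∞) := by
      have h2 : ‖(M ω : ℝ)‖₊ = (M ω : ℝ≥0) := by simp
      rw [h2]
      exact_mod_cast Nat.cast_le.mpr (by omega : M ω ≤ M ω + 1)
    exact h1
  have hM1int : Integrable (fun ω => (M ω : ℝ) + 1) μ := hMint.add (integrable_const 1)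
  have hM1eq : ∫ ω, ((M ω : ℝ) + 1) ∂μ = (∫ ω, (M ω : ℝ) ∂μ) + 1 := by
    rw [integral_add hMint (integrable_const 1)]
    simp
  have hM1ub : ∫ ω, ((M ω : ℝ) + 1) ∂μ ≤ (n:ℝ) * B := by
    have h0 : 0 ≤ᵐ[μ] fun ω => (M ω : ℝ) + 1 := ae_of_all _ fun ω => by positivity
    have h1 := ofReal_integral_eq_lintegral_ofReal hM1int h0
    have h2 : ∫⁻ ω, ENNReal.ofReal ((M ω : ℝ) + 1) ∂μ = ∫⁻ ω, ((M ω + 1 : ℕ) : ℝ≥0∞) ∂μ := by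
      apply lintegral_congr
      intro ω
      rw [show ((M ω : ℝ) + 1) = ((M ω + 1 : ℕ) : ℝ) by push_cast; ring,
        ENNReal.ofReal_natCast]
    rw [h2] at h1
    have h3 : ENNReal.ofReal (∫ ω, ((M ω : ℝ) + 1) ∂μ) ≤ ENNReal.ofReal ((n:ℝ) * B) := by
      rw [h1]; exact hlin
    exact (ENNReal.ofReal_le_ofReal_iff (by positivity)).mp h3
  have hnc : (n:ℝ) * c = lam / (1 - ρ) := by
    rw [hc]; field_simp
  have hupper : ∫ ω, (M ω : ℝ) ∂μ ≤ (n:ℝ) + lam / (1 - ρ) - 1 := by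
    have h1 : (n:ℝ) * B = (n:ℝ) * (1-ρ) + lam / (1-ρ) := by
      rw [hB, mul_add, hnc]
    have h2 : (n:ℝ) * (1-ρ) ≤ n := by nlinarith [mul_nonneg hn'.le hρ0]
    have h3 : (∫ ω, (M ω : ℝ) ∂μ) + 1 ≤ (n:ℝ) * B := by
      rw [← hM1eq]; exact hM1ub
    nlinarith [h1, h2, h3]
  -- lower bound
  have hWTmeas : AEMeasurable WT μ :=
    aemeasurable_of_tendsto_metrizable_ae' (fun K => (hFmeas K).aemeasurable)
      (by filter_upwards [hptall] with ω hω; exact hω.2.2.2.1)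
  have hWTint : Integrable WT μ := by
    refine Integrable.mono' (integrable_const B) hWTmeas.aestronglyMeasurable ?_
    filter_upwards [hptall] with ω hω
    rw [Real.norm_eq_abs, abs_le]
    exact ⟨by linarith [hω.2.2.2.2.2.1], hω.2.2.2.2.2.2⟩
  have htendI : Filter.Tendsto (fun K => ∫ ω, F K ω ∂μ) Filter.atTop (nhds (∫ ω, WT ω ∂μ)) :=
    integral_tendsto_of_tendsto_of_monotone hFint hWTint
      (by filter_upwards [hptall] with ω hω; exact hω.2.2.1)
      (by filter_upwards [hptall] with ω hω; exact hω.2.2.2.1)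
  have hFle : ∀ K, ∫ ω, F K ω ∂μ ≤ ((∫ ω, (M ω : ℝ) ∂μ) + 1) / n := by
    intro K
    have h1 : ∫ ω, ((min (M ω + 1) K : ℕ) : ℝ) ∂μ ≤ ∫ ω, ((M ω : ℝ) + 1) ∂μ := by
      apply integral_mono (hgint K) hM1int
      intro ω
      have h2 : ((min (M ω + 1) K : ℕ) : ℝ) ≤ ((M ω + 1 : ℕ) : ℝ) :=
        Nat.cast_le.mpr (min_le_left _ _)
      push_cast at h2 ⊢
      linarith
    have h3 : (n:ℝ) * ∫ ω, F K ω ∂μ ≤ (∫ ω, (M ω : ℝ) ∂μ) + 1 := by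
      rw [← hg_eq K] at *
      rw [hM1eq] at h1
      linarith
    rw [le_div_iff₀ hn']
    linarith
  have hWTle : ∫ ω, WT ω ∂μ ≤ ((∫ ω, (M ω : ℝ) ∂μ) + 1) / n :=
    le_of_tendsto' htendI hFle
  have hWTge : 1 - ρ ≤ ∫ ω, WT ω ∂μ := by
    have h1 : ∀ᵐ ω ∂μ, 1 - ρ ≤ WT ω := by
      filter_upwards [hptall] with ω hω
      exact hω.2.2.2.2.2.1.le
    calc (1:ℝ) - ρ = ∫ _ω, (1 - ρ : ℝ) ∂μ := by simp
    _ ≤ ∫ ω, WT ω ∂μ := integral_mono_ae (integrable_const _) hWTint h1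
  have hlower : (n : ℝ) * (1 - ρ) - 1 ≤ ∫ ω, (M ω : ℝ) ∂μ := by
    have h1 : 1 - ρ ≤ ((∫ ω, (M ω : ℝ) ∂μ) + 1) / n := le_trans hWTge hWTle
    rw [le_div_iff₀ hn'] at h1
    nlinarith [h1]
  exact ⟨hlower, hupper⟩
end

section
/- The expected sum of squared intersample distances up to the last sample in [0,1] satisfies E[Σ_{i=1}^{M} X_i²] ≤ (λ/(n(1 − ρ)))² · (E[M] − E[M ρ^M]). -/
open MeasureTheory ProbabilityTheory Real

lemma aux_exp_convex {t y b : ℝ} (hb : 0 < b) (h0 : 0 ≤ y) (h1 : y ≤ b) :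
    Real.exp (t * y) ≤ 1 + (y / b) * (Real.exp (t * b) - 1) := by
  have hs0 : 0 ≤ y / b := div_nonneg h0 hb.le
  have hs1 : y / b ≤ 1 := (div_le_one hb).2 h1
  have h := convexOn_exp.2 (Set.mem_univ 0) (Set.mem_univ (t * b))
    (by linarith : (0:ℝ) ≤ 1 - y / b) hs0 (by ring)
  have hyb : (y / b) * (t * b) = t * y := by field_simp
  simp only [smul_eq_mul, mul_zero, zero_add, Real.exp_zero, hyb] at h
  linarith

lemma aux_nat_tsum (k : ℕ) :
    ∑' m : ℕ, (if m < k then (1 : ENNReal) else 0) = (k : ENNReal) := by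
  rw [tsum_eq_sum (s := Finset.range k) (fun m hm => by
    simp [Finset.mem_range] at hm; simp [hm])]
  rw [Finset.sum_congr rfl (fun m hm => if_pos (Finset.mem_range.mp hm))]; simp

theorem stmt_8
    {Ω : Type*} [MeasurableSpace Ω] (μ : Measure Ω) [IsProbabilityMeasure μ]
    (ρ lam : ℝ) (n : ℕ)
    (hρ0 : 0 ≤ ρ) (hρ1 : ρ < 1) (hlam : 1 < lam) (hn : 0 < n)
    (Y X S : ℕ → Ω → ℝ) (M : Ω → ℕ)
    (hYmeas : ∀ i, Measurable (Y i))
    (hYindep : iIndepFun Y μ)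
    (hYident : ∀ i, IdentDistrib (Y i) (Y 1) μ μ)
    (hYbd : ∀ i, ∀ᵐ ω ∂μ, 0 < Y i ω ∧ Y i ω ≤ lam / n)
    (hYmean : ∀ i, ∫ ω, Y i ω ∂μ = 1 / n)
    (hX1 : ∀ ω, X 1 ω = Y 1 ω)
    (hXrec : ∀ i, 2 ≤ i → ∀ ω, X i ω = ρ * X (i - 1) ω + Y i ω)
    (hS : ∀ m ω, S m ω = ∑ i ∈ Finset.Icc 1 m, X i ω)
    (hMmeas : Measurable M)
    (hM : ∀ᵐ ω ∂μ, S (M ω) ω ≤ 1 ∧ 1 < S (M ω + 1) ω) :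
    ∫ ω, (∑ i ∈ Finset.Icc 1 (M ω), (X i ω) ^ 2) ∂μ ≤
      (lam / ((n : ℝ) * (1 - ρ))) ^ 2 *
        ((∫ ω, (M ω : ℝ) ∂μ) - ∫ ω, (M ω : ℝ) * ρ ^ (M ω) ∂μ) := by
  have hn' : (0:ℝ) < n := Nat.cast_pos.mpr hn
  have h1ρ : (0:ℝ) < 1 - ρ := by linarith
  have hlam0 : (0:ℝ) < lam := by linarith
  set c : ℝ := lam / ((n : ℝ) * (1 - ρ)) with hc
  have hcpos : 0 < c := by positivity
  have hcρ : c * (1 - ρ) = lam / n := by field_simp [hc]; rw [hc]; field_simp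
  have hb : (0:ℝ) < lam / n := by positivity
  -- pointwise structural bounds on X
  have key : ∀ ω, (∀ i, 0 < Y i ω ∧ Y i ω ≤ lam / n) → ∀ i, 1 ≤ i →
      0 < X i ω ∧ Y i ω ≤ X i ω ∧ X i ω ≤ c * (1 - ρ ^ i) := by
    intro ω hY i hi
    induction i, hi using Nat.le_induction with
    | base =>
      refine ⟨by rw [hX1]; exact (hY 1).1, by rw [hX1], ?_⟩
      rw [hX1, pow_one, hcρ]; exact (hY 1).2
    | succ i hi ih =>
      obtain ⟨hx0, _, hxle⟩ := ih
      have h2 : 2 ≤ i + 1 := by omega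
      have hrec := hXrec (i+1) h2 ω
      simp only [Nat.add_sub_cancel] at hrec
      have hY1 := (hY (i+1)).1
      have hY2 := (hY (i+1)).2
      have hmul : ρ * X i ω ≤ ρ * (c * (1 - ρ ^ i)) :=
        mul_le_mul_of_nonneg_left hxle hρ0
      have hmul0 : 0 ≤ ρ * X i ω := mul_nonneg hρ0 hx0.le
      refine ⟨by rw [hrec]; linarith, by rw [hrec]; linarith, ?_⟩
      have hrw : c * (1 - ρ ^ (i+1)) = ρ * (c * (1 - ρ ^ i)) + c * (1 - ρ) := by ring
      rw [hrec, hrw, hcρ]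
      linarith
  have haeY : ∀ᵐ ω ∂μ, ∀ i, 0 < Y i ω ∧ Y i ω ≤ lam / n := ae_all_iff.mpr hYbd
  -- pointwise inequality for the integrands
  have hptwise : ∀ᵐ ω ∂μ, ∑ i ∈ Finset.Icc 1 (M ω), (X i ω) ^ 2 ≤
      c ^ 2 * ((M ω : ℝ) - (M ω : ℝ) * ρ ^ (M ω)) := by
    filter_upwards [haeY] with ω hY
    have hterm : ∀ i ∈ Finset.Icc 1 (M ω), (X i ω) ^ 2 ≤ c ^ 2 * (1 - ρ ^ (M ω)) := by
      intro i hi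
      rw [Finset.mem_Icc] at hi
      obtain ⟨hx0, _, hxle⟩ := key ω hY i hi.1
      have hρi0 : 0 ≤ ρ ^ i := pow_nonneg hρ0 i
      have hρi1 : ρ ^ i ≤ 1 := pow_le_one₀ hρ0 hρ1.le
      have hρMi : ρ ^ (M ω) ≤ ρ ^ i := pow_le_pow_of_le_one hρ0 hρ1.le hi.2
      have h1 : (X i ω) ^ 2 ≤ (c * (1 - ρ ^ i)) ^ 2 := by nlinarith
      have h3 : (1 - ρ ^ i) ^ 2 ≤ 1 - ρ ^ i := by nlinarith
      have h4 : (1 - ρ ^ i) ≤ 1 - ρ ^ (M ω) := by linarith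
      have h5 : c ^ 2 * ((1 - ρ ^ i) ^ 2) ≤ c ^ 2 * (1 - ρ ^ i) :=
        mul_le_mul_of_nonneg_left h3 (sq_nonneg c)
      have h6 : c ^ 2 * (1 - ρ ^ i) ≤ c ^ 2 * (1 - ρ ^ (M ω)) :=
        mul_le_mul_of_nonneg_left h4 (sq_nonneg c)
      nlinarith
    calc ∑ i ∈ Finset.Icc 1 (M ω), (X i ω) ^ 2
        ≤ ∑ _i ∈ Finset.Icc 1 (M ω), c ^ 2 * (1 - ρ ^ (M ω)) :=
          Finset.sum_le_sum hterm
      _ = (M ω : ℝ) * (c ^ 2 * (1 - ρ ^ (M ω))) := by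
          simp [Finset.sum_const, Nat.card_Icc, nsmul_eq_mul]
      _ = c ^ 2 * ((M ω : ℝ) - (M ω : ℝ) * ρ ^ (M ω)) := by ring
  -- integrability of Y and exp(t Y)
  have hYint : ∀ i, Integrable (Y i) μ := by
    intro i
    refine Integrable.mono' (integrable_const (lam / n)) (hYmeas i).aestronglyMeasurable ?_
    filter_upwards [hYbd i] with ω h
    rw [Real.norm_eq_abs, abs_of_pos h.1]; exact h.2
  set t : ℝ := -(n : ℝ) with ht
  have ht0 : t ≤ 0 := by simp [ht]
  set q : ℝ := 1 + (Real.exp (-lam) - 1) / lam with hq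
  have hexplam : Real.exp (-lam) < 1 := by
    rw [← Real.exp_zero]; exact Real.exp_lt_exp.mpr (by linarith)
  have hq1 : q < 1 := by
    rw [hq]
    have : (Real.exp (-lam) - 1) / lam < 0 := div_neg_of_neg_of_pos (by linarith) hlam0
    linarith
  have hq0 : 0 < q := by
    rw [hq]
    have h1 : (Real.exp (-lam) - 1) / lam > -1 := by
      rw [gt_iff_lt, neg_lt, ← neg_div]
      rw [div_lt_one hlam0]
      have := Real.exp_pos (-lam)
      linarith
    linarith
  have hexpint : ∀ i, Integrable (fun ω => Real.exp (t * Y i ω)) μ := by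
    intro i
    refine Integrable.mono' (integrable_const 1)
      (((hYmeas i).const_mul t).exp).aestronglyMeasurable ?_
    filter_upwards [hYbd i] with ω h
    rw [Real.norm_eq_abs, abs_of_pos (Real.exp_pos _), ← Real.exp_zero]
    apply Real.exp_le_exp.mpr
    have : t * Y i ω ≤ 0 := mul_nonpos_of_nonpos_of_nonneg ht0 h.1.le
    linarith
  -- bound on mgf of each Y i
  have htlam : t * (lam / n) = -lam := by field_simp [ht]; ring
  set C : ℝ := ((n : ℝ) / lam) * (Real.exp (-lam) - 1) with hC
  have hmgf : ∀ i, mgf (Y i) μ t ≤ q := by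
    intro i
    have hgint : Integrable (fun ω => 1 + C * Y i ω) μ :=
      (integrable_const 1).add ((hYint i).const_mul C)
    have hle : ∀ᵐ ω ∂μ, Real.exp (t * Y i ω) ≤ 1 + C * Y i ω := by
      filter_upwards [hYbd i] with ω h
      have hcv := aux_exp_convex (t := t) hb h.1.le h.2
      rw [htlam] at hcv
      have : (Y i ω / (lam / n)) * (Real.exp (-lam) - 1) = C * Y i ω := by
        rw [hC]; field_simp
      linarith
    have hint : ∫ ω, (1 + C * Y i ω) ∂μ = q := by
      rw [integral_add (integrable_const 1) ((hYint i).const_mul C),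
        integral_const, integral_const_mul, hYmean i]
      simp only [measure_univ, probReal_univ, ENNReal.toReal_one, smul_eq_mul, one_mul]
      rw [hq, hC]
      field_simp
    calc mgf (Y i) μ t = ∫ ω, Real.exp (t * Y i ω) ∂μ := rfl
      _ ≤ ∫ ω, (1 + C * Y i ω) ∂μ := integral_mono_ae (hexpint i) hgint hle
      _ = q := hint
  -- tail bound for M
  have htail : ∀ m : ℕ, μ {ω | m < M ω} ≤ ENNReal.ofReal (Real.exp n * q ^ (m+1)) := by
    intro m
    set W : Ω → ℝ := ∑ i ∈ Finset.Icc 1 (m+1), Y i with hW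
    have hWapp : ∀ ω, W ω = ∑ i ∈ Finset.Icc 1 (m+1), Y i ω := by
      intro ω; rw [hW]; simp [Finset.sum_apply]
    have hWmeas : Measurable W := by
      have : W = fun ω => ∑ i ∈ Finset.Icc 1 (m+1), Y i ω := funext hWapp
      rw [this]; exact Finset.measurable_sum _ (fun i _ => hYmeas i)
    have hWint : Integrable (fun ω => Real.exp (t * W ω)) μ := by
      refine Integrable.mono' (integrable_const 1)
        ((hWmeas.const_mul t).exp).aestronglyMeasurable ?_
      filter_upwards [haeY] with ω h
      rw [Real.norm_eq_abs, abs_of_pos (Real.exp_pos _), ← Real.exp_zero]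
      apply Real.exp_le_exp.mpr
      have hW0 : 0 ≤ W ω := by
        rw [hWapp]; exact Finset.sum_nonneg (fun i _ => (h i).1.le)
      have : t * W ω ≤ 0 := mul_nonpos_of_nonpos_of_nonneg ht0 hW0
      linarith
    have hcher := measure_le_le_exp_mul_mgf (μ := μ) (X := W) (t := t) 1 ht0 hWint
    have hmgfW : mgf W μ t ≤ q ^ (m+1) := by
      rw [hW, hYindep.mgf_sum hYmeas]
      calc ∏ i ∈ Finset.Icc 1 (m+1), mgf (Y i) μ t
          ≤ ∏ _i ∈ Finset.Icc 1 (m+1), q :=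
            Finset.prod_le_prod (fun i _ => mgf_nonneg) (fun i _ => hmgf i)
        _ = q ^ (m+1) := by rw [Finset.prod_const, Nat.card_Icc]; norm_num
    have hsub : {ω | m < M ω} ≤ᵐ[μ] {ω | W ω ≤ 1} := by
      filter_upwards [haeY, hM] with ω hY hMω hmem
      have hm1 : m + 1 ≤ M ω := hmem
      have hmono : ∀ a b : ℕ, a ≤ b → S a ω ≤ S b ω := by
        intro a b hab
        rw [hS, hS]
        refine Finset.sum_le_sum_of_subset_of_nonneg
          (Finset.Icc_subset_Icc_right hab) (fun i hi _ => ?_)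
        exact (key ω hY i (Finset.mem_Icc.mp hi).1).1.le
      have hWS : W ω ≤ S (m+1) ω := by
        rw [hWapp, hS]
        exact Finset.sum_le_sum (fun i hi =>
          (key ω hY i (Finset.mem_Icc.mp hi).1).2.1)
      have : S (m+1) ω ≤ S (M ω) ω := hmono _ _ hm1
      exact le_trans hWS (le_trans this hMω.1)
    have hbound : Real.exp (-t * 1) * mgf W μ t ≤ Real.exp n * q ^ (m+1) := by
      have hexp : Real.exp (-t * 1) = Real.exp n := by rw [ht]; norm_num
      rw [hexp]
      exact mul_le_mul_of_nonneg_left hmgfW (Real.exp_pos _).le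
    calc μ {ω | m < M ω} ≤ μ {ω | W ω ≤ 1} := measure_mono_ae hsub
      _ ≤ ENNReal.ofReal (Real.exp n * q ^ (m+1)) := by
        rw [ENNReal.le_ofReal_iff_toReal_le (measure_ne_top μ _) (by positivity)]
        exact le_trans hcher hbound
  -- integrability of M
  have hMRmeas : Measurable (fun ω => (M ω : ℝ)) := measurable_from_top.comp hMmeas
  have hMint : Integrable (fun ω => (M ω : ℝ)) μ := by
    refine ⟨hMRmeas.aestronglyMeasurable, ?_⟩
    rw [HasFiniteIntegral]
    have heq : ∀ ω, (‖(M ω : ℝ)‖₊ : ENNReal) = (M ω : ENNReal) := by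
      intro ω
      simp [Real.nnnorm_natCast]
    calc ∫⁻ ω, (‖(M ω : ℝ)‖₊ : ENNReal) ∂μ
        = ∫⁻ ω, (M ω : ENNReal) ∂μ := by
          exact lintegral_congr heq
      _ = ∫⁻ ω, ∑' m : ℕ, (if m < M ω then (1:ENNReal) else 0) ∂μ := by
          exact lintegral_congr (fun ω => (aux_nat_tsum (M ω)).symm)
      _ = ∑' m : ℕ, ∫⁻ ω, (if m < M ω then (1:ENNReal) else 0) ∂μ := by
          refine lintegral_tsum (fun m => ?_)
          exact (Measurable.ite (hMmeas (by trivial : MeasurableSet {k : ℕ | m < k}))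
            measurable_const measurable_const).aemeasurable
      _ = ∑' m : ℕ, μ {ω | m < M ω} := by
          refine tsum_congr (fun m => ?_)
          have : ∀ ω, (if m < M ω then (1:ENNReal) else 0) =
              Set.indicator {ω | m < M ω} (fun _ => (1:ENNReal)) ω := by
            intro ω; simp [Set.indicator_apply]
          rw [lintegral_congr this, lintegral_indicator_const, one_mul]
          exact hMmeas (by trivial : MeasurableSet {k : ℕ | m < k})
      _ ≤ ∑' m : ℕ, ENNReal.ofReal (Real.exp n * q) * (ENNReal.ofReal q) ^ m := by
          refine ENNReal.tsum_le_tsum (fun m => le_trans (htail m) (le_of_eq ?_))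
          rw [← ENNReal.ofReal_pow hq0.le, ← ENNReal.ofReal_mul (by positivity)]
          ring_nf
      _ = ENNReal.ofReal (Real.exp n * q) * (1 - ENNReal.ofReal q)⁻¹ := by
          rw [ENNReal.tsum_mul_left, ENNReal.tsum_geometric]
      _ < ⊤ := by
          refine ENNReal.mul_lt_top ENNReal.ofReal_lt_top ?_
          rw [ENNReal.inv_lt_top]
          simp only [tsub_pos_iff_lt]
          exact ENNReal.ofReal_lt_one.mpr hq1
  have hMρint : Integrable (fun ω => (M ω : ℝ) * ρ ^ (M ω)) μ := by
    have hgm : Measurable (fun k : ℕ => (k : ℝ) * ρ ^ k) := measurable_from_top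
    refine Integrable.mono' hMint (hgm.comp hMmeas).aestronglyMeasurable ?_
    filter_upwards with ω
    rw [Real.norm_eq_abs, abs_mul, abs_of_nonneg (by positivity : (0:ℝ) ≤ (M ω : ℝ)),
      abs_of_nonneg (pow_nonneg hρ0 _)]
    calc (M ω : ℝ) * ρ ^ (M ω) ≤ (M ω : ℝ) * 1 :=
          mul_le_mul_of_nonneg_left (pow_le_one₀ hρ0 hρ1.le) (by positivity)
      _ = (M ω : ℝ) := mul_one _
  -- finish
  have hgint : Integrable (fun ω => c ^ 2 * ((M ω : ℝ) - (M ω : ℝ) * ρ ^ (M ω))) μ :=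
    (hMint.sub hMρint).const_mul _
  have hf0 : 0 ≤ᵐ[μ] fun ω => ∑ i ∈ Finset.Icc 1 (M ω), (X i ω) ^ 2 := by
    filter_upwards with ω
    exact Finset.sum_nonneg (fun i _ => sq_nonneg _)
  have hmain := integral_mono_of_nonneg hf0 hgint hptwise
  rw [integral_const_mul, integral_sub hMint hMρint] at hmain
  exact hmain
end

section
/- Assume additionally 0 < ρ < 1 and that the sampling density satisfies n > (λ/(1 − ρ))(1 − 2/ln ρ). Then M > −2/ln ρ almost surely and, by Jensen's inequality applied to the function x ↦ x ρ^x (which is convex on (−2/ln ρ, ∞)), E[M ρ^M] ≥ E[M] · ρ^{E[M]}. -/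
open MeasureTheory ProbabilityTheory Real

lemma hd1' (c x : ℝ) : HasDerivAt (fun x => x * Real.exp (c*x)) ((1 + c*x) * Real.exp (c*x)) x := by
  have he : HasDerivAt (fun x => Real.exp (c*x)) (Real.exp (c*x) * c) x := by
    simpa [Function.comp_def] using (Real.hasDerivAt_exp (c*x)).comp x ((hasDerivAt_id x).const_mul c)
  have := (hasDerivAt_id x).mul he
  exact this.congr_deriv (by simp; ring)

lemma hd2' (c x : ℝ) : HasDerivAt (fun x => (1 + c*x) * Real.exp (c*x)) (c * (2 + c*x) * Real.exp (c*x)) x := by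
  have he : HasDerivAt (fun x => Real.exp (c*x)) (Real.exp (c*x) * c) x := by
    simpa [Function.comp_def] using (Real.hasDerivAt_exp (c*x)).comp x ((hasDerivAt_id x).const_mul c)
  have hl : HasDerivAt (fun x : ℝ => 1 + c*x) c x := by
    simpa using ((hasDerivAt_id x).const_mul c).const_add 1
  have := hl.mul he
  exact this.congr_deriv (by ring)

lemma convex_aux {c : ℝ} (hc : c < 0) :
    ConvexOn ℝ (Set.Ici (-2/c)) (fun x => x * Real.exp (c*x)) := by
  have hderiv : deriv (fun x => x * Real.exp (c*x)) = fun x => (1 + c*x) * Real.exp (c*x) :=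
    funext fun x => (hd1' c x).deriv
  apply convexOn_of_deriv2_nonneg (convex_Ici _)
  · exact Continuous.continuousOn (by continuity)
  · intro x _; exact (hd1' c x).differentiableAt.differentiableWithinAt
  · intro x _; rw [hderiv]; exact (hd2' c x).differentiableAt.differentiableWithinAt
  · intro x hx
    rw [interior_Ici] at hx
    have hx' : -2/c < x := hx
    have h1 : c * x < c * (-2/c) := mul_lt_mul_of_neg_left hx' hc
    have hcc : c * (-2/c) = -2 := by rw [mul_comm]; exact div_mul_cancel₀ _ hc.ne
    have h2 : 2 + c*x < 0 := by rw [hcc] at h1; linarith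
    have heq : deriv^[2] (fun x => x * Real.exp (c*x)) x = c * (2 + c*x) * Real.exp (c*x) := by
      rw [Function.iterate_succ, Function.iterate_one, Function.comp_apply, hderiv]
      exact (hd2' c x).deriv
    rw [heq]
    exact le_of_lt (mul_pos (mul_pos_of_neg_of_neg hc h2) (Real.exp_pos _))

lemma bound_aux {c : ℝ} (hc : c < 0) (m : ℕ) : (m : ℝ) * Real.exp (c * m) ≤ 1 / (-c) := by
  have hcpos : 0 < -c := neg_pos.mpr hc
  rcases Nat.eq_zero_or_pos m with h | h
  · subst h
    simp only [Nat.cast_zero, zero_mul]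
    exact le_of_lt (div_pos one_pos hcpos)
  · have hm : (0:ℝ) < m := by exact_mod_cast h
    have ht : (0:ℝ) < (-c) * m := mul_pos hcpos hm
    have hlt : (-c) * m < Real.exp ((-c) * m) := by
      have := Real.add_one_le_exp ((-c) * m); linarith
    have hexp : Real.exp (c * m) = 1 / Real.exp ((-c) * m) := by
      rw [eq_div_iff (Real.exp_pos _).ne', ← Real.exp_add]
      ring_nf
      exact Real.exp_zero
    rw [hexp]
    calc (m:ℝ) * (1 / Real.exp ((-c)*m)) = m / Real.exp ((-c)*m) := by ring
      _ ≤ m / ((-c)*m) := by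
          exact div_le_div_of_nonneg_left (le_of_lt hm) ht hlt.le
      _ = 1 / (-c) := by rw [mul_comm, div_mul_eq_div_div, div_self hm.ne']

theorem stmt_10
    {Ω : Type*} [MeasurableSpace Ω] (μ : Measure Ω) [IsProbabilityMeasure μ]
    (ρ lam : ℝ) (n : ℕ)
    (hρ0 : 0 ≤ ρ) (hρ1 : ρ < 1) (hlam : 1 < lam) (hn : 0 < n)
    (Y X S : ℕ → Ω → ℝ) (M : Ω → ℕ)
    (hYmeas : ∀ i, Measurable (Y i))
    (hYindep : iIndepFun Y μ)
    (hYident : ∀ i, IdentDistrib (Y i) (Y 1) μ μ)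
    (hYbd : ∀ i, ∀ᵐ ω ∂μ, 0 < Y i ω ∧ Y i ω ≤ lam / n)
    (hYmean : ∀ i, ∫ ω, Y i ω ∂μ = 1 / n)
    (hX1 : ∀ ω, X 1 ω = Y 1 ω)
    (hXrec : ∀ i, 2 ≤ i → ∀ ω, X i ω = ρ * X (i - 1) ω + Y i ω)
    (hS : ∀ m ω, S m ω = ∑ i ∈ Finset.Icc 1 m, X i ω)
    (hMmeas : Measurable M)
    (hM : ∀ᵐ ω ∂μ, S (M ω) ω ≤ 1 ∧ 1 < S (M ω + 1) ω)
    (hρpos : 0 < ρ)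
    (hngt : lam / (1 - ρ) * (1 - 2 / Real.log ρ) < (n : ℝ)) :
    (∀ᵐ ω ∂μ, -2 / Real.log ρ < (M ω : ℝ)) ∧
    (∫ ω, (M ω : ℝ) ∂μ) * ρ ^ (∫ ω, (M ω : ℝ) ∂μ) ≤ ∫ ω, (M ω : ℝ) * ρ ^ (M ω) ∂μ := by
  set c : ℝ := Real.log ρ with hcdef
  have hc : c < 0 := Real.log_neg hρpos hρ1
  have hlam0 : (0:ℝ) < lam := by linarith
  have h1ρ : (0:ℝ) < 1 - ρ := by linarith
  have hn0 : (0:ℝ) < n := by exact_mod_cast hn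
  have hp : (0:ℝ) < n * (1 - ρ) := mul_pos hn0 h1ρ
  -- Part 1 : a.s. lower bound on M
  have part1 : ∀ᵐ ω ∂μ, -2 / c < (M ω : ℝ) := by
    have hYae : ∀ᵐ ω ∂μ, ∀ i, 0 < Y i ω ∧ Y i ω ≤ lam / n := ae_all_iff.mpr hYbd
    filter_upwards [hYae, hM] with ω hY hMω
    set B : ℝ := lam / (n * (1 - ρ)) with hBdef
    have hB : 0 < B := div_pos hlam0 hp
    have hBn : lam / n ≤ B := by
      rw [hBdef, div_le_div_iff₀ hn0 hp]
      nlinarith [mul_nonneg (mul_nonneg hlam0.le hn0.le) hρ0]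
    have hXB : ∀ i, 1 ≤ i → X i ω ≤ B := by
      intro i hi
      induction i, hi using Nat.le_induction with
      | base => rw [hX1 ω]; exact le_trans (hY 1).2 hBn
      | succ i hi ih =>
        have h2 : 2 ≤ i + 1 := by omega
        rw [hXrec (i+1) h2 ω]
        have hidx : i + 1 - 1 = i := by omega
        rw [hidx]
        have hstep : ρ * B + lam / n = B := by
          rw [hBdef]; field_simp; ring
        have : ρ * X i ω ≤ ρ * B := mul_le_mul_of_nonneg_left ih hρ0
        linarith [(hY (i+1)).2]
    have hSle : S (M ω + 1) ω ≤ (M ω + 1 : ℕ) * B := by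
      rw [hS (M ω + 1) ω]
      calc ∑ i ∈ Finset.Icc 1 (M ω + 1), X i ω
          ≤ ∑ i ∈ Finset.Icc 1 (M ω + 1), B := by
            apply Finset.sum_le_sum
            intro i hi
            exact hXB i (Finset.mem_Icc.mp hi).1
        _ = (M ω + 1 : ℕ) * B := by
            rw [Finset.sum_const, Nat.card_Icc]
            simp [nsmul_eq_mul]
    have h1 : (1:ℝ) < ((M ω : ℝ) + 1) * B := by
      have := hMω.2
      push_cast at hSle ⊢
      linarith
    -- n(1-ρ) < (M+1) lam
    have h2 : (n:ℝ) * (1 - ρ) < ((M ω : ℝ) + 1) * lam := by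
      rw [hBdef, mul_div_assoc'] at h1
      have := (lt_div_iff₀ hp).mp h1
      linarith
    -- lam * (1 - 2/c) < n(1-ρ)
    have h3 : lam * (1 - 2/c) < (n:ℝ) * (1 - ρ) := by
      rw [div_mul_eq_mul_div] at hngt
      exact (div_lt_iff₀ h1ρ).mp hngt
    have h4 : 1 - 2/c < (M ω : ℝ) + 1 := by
      have := lt_trans h3 h2
      nlinarith
    have : -2/c = -(2/c) := by ring
    linarith [h4, this ▸ le_refl (-2/c)]
  refine ⟨part1, ?_⟩
  -- Part 2 : Jensen
  set g : ℝ → ℝ := fun x => x * Real.exp (c * x) with hgdef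
  have hgnat : ∀ m : ℕ, (m : ℝ) * ρ ^ m = g m := by
    intro m
    have : ρ ^ m = Real.exp (c * m) := by
      rw [← Real.exp_log hρpos, ← Real.exp_nat_mul, mul_comm]
    rw [this]
  have hrhs_eq : ∫ ω, (M ω : ℝ) * ρ ^ (M ω) ∂μ = ∫ ω, g (M ω) ∂μ := by
    congr 1; funext ω; exact hgnat (M ω)
  have hmeasg : Measurable (fun ω => g (M ω)) :=
    (measurable_from_top (f := fun m : ℕ => g (m : ℝ))).comp hMmeas
  have hgi : Integrable (fun ω => g (M ω)) μ := by
    refine ⟨hmeasg.aestronglyMeasurable, ?_⟩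
    apply MeasureTheory.HasFiniteIntegral.of_bounded (C := 1 / (-c))
    filter_upwards with ω
    have h0 : 0 ≤ g (M ω) := by
      rw [hgdef]
      exact mul_nonneg (Nat.cast_nonneg _) (Real.exp_pos _).le
    rw [Real.norm_eq_abs, abs_of_nonneg h0]
    exact bound_aux hc (M ω)
  have hρrpow : ρ ^ (∫ ω, (M ω : ℝ) ∂μ) = Real.exp (c * (∫ ω, (M ω : ℝ) ∂μ)) :=
    Real.rpow_def_of_pos hρpos _
  by_cases hMi : Integrable (fun ω => (M ω : ℝ)) μ
  · have hjensen :=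
      (convex_aux hc).map_integral_le (μ := μ) (f := fun ω => (M ω : ℝ))
        (Continuous.continuousOn (by continuity))
        isClosed_Ici
        (by filter_upwards [part1] with ω hω; exact le_of_lt hω)
        hMi
        (by exact hgi)
    rw [hrhs_eq, hρrpow]
    simpa [Function.comp] using hjensen
  · rw [integral_undef hMi]
    rw [Real.rpow_zero, zero_mul]
    apply integral_nonneg
    intro ω
    exact mul_nonneg (Nat.cast_nonneg _) (pow_nonneg hρ0 _)
end

section
/- Assume additionally 0 < ρ < 1 and that the sampling density satisfies n > (λ/(1 − ρ))(1 − 2/ln ρ). Then the expected sum of squared intersample distances satisfies E[Σ_{i=1}^{M} X_i²] ≤ (λ/(n(1 − ρ)))² · (n + (1 − ρ)/λ) · (1 − ρ^{n + 1/λ}). -/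
open MeasureTheory ProbabilityTheory Real

theorem stmt_11
    {Ω : Type*} [MeasurableSpace Ω] (μ : Measure Ω) [IsProbabilityMeasure μ]
    (ρ lam : ℝ) (n : ℕ)
    (hρ0 : 0 ≤ ρ) (hρ1 : ρ < 1) (hlam : 1 < lam) (hn : 0 < n)
    (Y X S : ℕ → Ω → ℝ) (M : Ω → ℕ)
    (hYmeas : ∀ i, Measurable (Y i))
    (hYindep : iIndepFun Y μ)
    (hYident : ∀ i, IdentDistrib (Y i) (Y 1) μ μ)
    (hYbd : ∀ i, ∀ᵐ ω ∂μ, 0 < Y i ω ∧ Y i ω ≤ lam / n)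
    (hYmean : ∀ i, ∫ ω, Y i ω ∂μ = 1 / n)
    (hX1 : ∀ ω, X 1 ω = Y 1 ω)
    (hXrec : ∀ i, 2 ≤ i → ∀ ω, X i ω = ρ * X (i - 1) ω + Y i ω)
    (hS : ∀ m ω, S m ω = ∑ i ∈ Finset.Icc 1 m, X i ω)
    (hMmeas : Measurable M)
    (hM : ∀ᵐ ω ∂μ, S (M ω) ω ≤ 1 ∧ 1 < S (M ω + 1) ω)
    (hρpos : 0 < ρ)
    (hngt : lam / (1 - ρ) * (1 - 2 / Real.log ρ) < (n : ℝ)) :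
    ∫ ω, (∑ i ∈ Finset.Icc 1 (M ω), (X i ω) ^ 2) ∂μ ≤
      (lam / ((n : ℝ) * (1 - ρ))) ^ 2 * ((n : ℝ) + (1 - ρ) / lam) *
        (1 - ρ ^ ((n : ℝ) + 1 / lam)) := by
  have hρ1' : (0:ℝ) < 1 - ρ := by linarith
  have hn' : (0:ℝ) < n := by exact_mod_cast hn
  have hn1 : (1:ℝ) ≤ n := by exact_mod_cast hn
  have hlam0 : (0:ℝ) < lam := by linarith
  set c : ℝ := lam / ((n:ℝ) * (1 - ρ)) with hc
  have hc0 : 0 < c := by positivity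
  -- a.e. pointwise bound on the sum
  have hbound : ∀ᵐ ω ∂μ, (∑ i ∈ Finset.Icc 1 (M ω), (X i ω) ^ 2) ≤ c := by
    filter_upwards [ae_all_iff.mpr hYbd, hM] with ω hY hMω
    have hX : ∀ i, 1 ≤ i → 0 < X i ω ∧ X i ω ≤ c := by
      intro i hi
      induction i, hi using Nat.le_induction with
      | base =>
        rw [hX1]
        refine ⟨(hY 1).1, le_trans (hY 1).2 ?_⟩
        rw [hc, div_le_div_iff₀ (by positivity) (by positivity)]
        nlinarith [mul_nonneg (mul_nonneg hlam0.le hn'.le) hρ0]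
      | succ i hi ih =>
        rw [hXrec (i + 1) (by omega) ω]
        simp only [Nat.add_sub_cancel]
        have h1 := (hY (i + 1)).1
        have h2 := (hY (i + 1)).2
        constructor
        · nlinarith [ih.1]
        · have hmul : ρ * X i ω ≤ ρ * c := by nlinarith [ih.2]
          have hcalc : ρ * c + lam / n = c := by
            rw [hc]; field_simp; ring
          linarith
    have h1 : (∑ i ∈ Finset.Icc 1 (M ω), (X i ω) ^ 2) ≤ c * S (M ω) ω := by
      rw [hS, Finset.mul_sum]
      apply Finset.sum_le_sum
      intro i hi
      obtain ⟨hpos, hle⟩ := hX i (Finset.mem_Icc.mp hi).1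
      nlinarith
    have h2 : c * S (M ω) ω ≤ c * 1 := by
      have := hMω.1
      nlinarith
    linarith
  -- algebra: c ≤ RHS
  set p : ℝ := ρ ^ ((n : ℝ) + 1 / lam) with hp
  have hple : p ≤ ρ := by
    rw [hp]
    calc ρ ^ ((n : ℝ) + 1 / lam) ≤ ρ ^ (1 : ℝ) := by
          apply Real.rpow_le_rpow_of_exponent_ge hρpos hρ1.le
          have : 0 < 1 / lam := by positivity
          linarith
      _ = ρ := Real.rpow_one ρ
  have hAp : 0 < lam / (1 - ρ) + 1 / n := by positivity
  have h1p : 1 / (lam / (1 - ρ) + 1 / n) ≤ 1 - p := by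
    have h3 : 1 / (lam / (1 - ρ) + 1 / n) ≤ 1 - ρ := by
      rw [div_le_iff₀ hAp]
      have hexp : (1 - ρ) * (lam / (1 - ρ) + 1 / n) = lam + (1 - ρ) / n := by
        field_simp
      rw [hexp]
      have : 0 ≤ (1 - ρ) / n := by positivity
      linarith
    linarith
  have hA : c * ((n : ℝ) + (1 - ρ) / lam) = lam / (1 - ρ) + 1 / n := by
    rw [hc]; field_simp
  have h2 : 1 ≤ (lam / (1 - ρ) + 1 / n) * (1 - p) := by
    calc (1:ℝ) = (lam / (1 - ρ) + 1 / n) * (1 / (lam / (1 - ρ) + 1 / n)) := by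
          rw [mul_one_div_cancel hAp.ne']
      _ ≤ (lam / (1 - ρ) + 1 / n) * (1 - p) :=
          mul_le_mul_of_nonneg_left h1p hAp.le
  have hcRHS : c ≤ (lam / ((n : ℝ) * (1 - ρ))) ^ 2 * ((n : ℝ) + (1 - ρ) / lam) *
      (1 - ρ ^ ((n : ℝ) + 1 / lam)) := by
    calc c = c * 1 := (mul_one c).symm
      _ ≤ c * ((lam / (1 - ρ) + 1 / n) * (1 - p)) :=
          mul_le_mul_of_nonneg_left h2 hc0.le
      _ = (lam / ((n : ℝ) * (1 - ρ))) ^ 2 * ((n : ℝ) + (1 - ρ) / lam) * (1 - p) := by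
          rw [← hA, ← hc]; ring
  by_cases hint : Integrable (fun ω => ∑ i ∈ Finset.Icc 1 (M ω), (X i ω) ^ 2) μ
  · calc ∫ ω, (∑ i ∈ Finset.Icc 1 (M ω), (X i ω) ^ 2) ∂μ
        ≤ ∫ _, c ∂μ := integral_mono_ae hint (integrable_const c) hbound
      _ = c := by simp
      _ ≤ _ := hcRHS
  · rw [integral_undef hint]
    linarith
end

section
/- For every positive integer m and every integer k with |k| ≤ b, the m-point Riemann-sum approximation A_R[k] = (1/m) Σ_{i=1}^{m} g(i/m) e^{−j2πki/m} of the Fourier coefficient a[k] = ∫₀¹ g(x) e^{−j2πkx} dx satisfies |A_R[k] − a[k]|² ≤ 16 b² π² / m². -/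
open MeasureTheory ProbabilityTheory Real

private lemma orth15 (n : ℤ) :
    (∫ x in (0:ℝ)..1, Complex.exp (2 * (Real.pi:ℂ) * Complex.I * n * x)) =
      if n = 0 then 1 else 0 := by
  by_cases hn : n = 0
  · simp [hn]
  · have hc : (2 * (Real.pi:ℂ) * Complex.I * n) ≠ 0 := by
      simp [Complex.I_ne_zero, Real.pi_ne_zero, hn]
    rw [integral_exp_mul_complex hc]
    simp only [Complex.ofReal_one, mul_one, Complex.ofReal_zero, mul_zero, Complex.exp_zero]
    rw [show (2 * (Real.pi:ℂ) * Complex.I * n) = n * (2 * Real.pi * Complex.I) by ring,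
      Complex.exp_int_mul_two_pi_mul_I]
    simp [hn]

private lemma geom15 (m : ℕ) (hm : 0 < m) (n : ℤ) :
    (∑ i ∈ Finset.Icc 1 m, Complex.exp (2 * (Real.pi:ℂ) * Complex.I * n * i / m)) =
      if (m:ℤ) ∣ n then (m:ℂ) else 0 := by
  have hm0 : (m:ℂ) ≠ 0 := Nat.cast_ne_zero.2 hm.ne'
  set z : ℂ := Complex.exp (2 * (Real.pi:ℂ) * Complex.I * n / m) with hz
  have hterm : ∀ i : ℕ, Complex.exp (2 * (Real.pi:ℂ) * Complex.I * n * i / m) = z ^ i := by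
    intro i
    rw [hz, ← Complex.exp_nat_mul]
    ring_nf
  have hzm : z ^ m = 1 := by
    rw [hz, ← Complex.exp_nat_mul]
    rw [show (m:ℂ) * (2 * (Real.pi:ℂ) * Complex.I * n / m) = n * (2 * Real.pi * Complex.I) by
      field_simp]
    exact Complex.exp_int_mul_two_pi_mul_I n
  simp only [hterm]
  by_cases hd : (m:ℤ) ∣ n
  · obtain ⟨t, rfl⟩ := hd
    have hz1 : z = 1 := by
      rw [hz, show (2 * (Real.pi:ℂ) * Complex.I * ((m:ℤ)*t : ℤ) / m) = t * (2 * Real.pi * Complex.I) by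
        push_cast; field_simp]
      exact Complex.exp_int_mul_two_pi_mul_I t
    simp [hz1, Nat.card_Icc]
  · have hz1 : z ≠ 1 := by
      intro h
      rw [hz] at h
      obtain ⟨t, ht⟩ := Complex.exp_eq_one_iff.1 h
      apply hd
      have h2 : (2 * (Real.pi:ℂ) * Complex.I) ≠ 0 := by
        simp [Complex.I_ne_zero, Real.pi_ne_zero]
      have : (n:ℂ) = (m:ℂ) * t := by
        field_simp at ht
        exact ht
      exact ⟨t, by exact_mod_cast this⟩
    rw [show Finset.Icc 1 m = Finset.Ico 1 (m+1) by rw [Finset.Ico_add_one_right_eq_Icc]]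
    rw [geom_sum_Ico hz1 (by omega), pow_succ, hzm]
    simp [hd]

private lemma coeff_bd15 (b : ℕ) (a : ℤ → ℂ) (g : ℝ → ℂ)
    (hg : ∀ x : ℝ, g x = ∑ k ∈ Finset.Icc (-(b : ℤ)) (b : ℤ),
        a k * Complex.exp (2 * (Real.pi : ℂ) * Complex.I * (k : ℂ) * (x : ℂ)))
    (hgbd : ∀ x : ℝ, ‖g x‖ ≤ 1)
    (l : ℤ) (hl : l ∈ Finset.Icc (-(b : ℤ)) (b : ℤ)) :
    ‖a l‖ ≤ 1 := by
  have key : a l = ∫ x in (0:ℝ)..1,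
      g x * Complex.exp (-(2 * (Real.pi:ℂ) * Complex.I * l * x)) := by
    have h1 : ∀ x : ℝ, g x * Complex.exp (-(2 * (Real.pi:ℂ) * Complex.I * l * x)) =
        ∑ l' ∈ Finset.Icc (-(b:ℤ)) (b:ℤ),
          a l' * Complex.exp (2 * (Real.pi:ℂ) * Complex.I * ((l' - l : ℤ):ℂ) * x) := by
      intro x
      rw [hg x, Finset.sum_mul]
      refine Finset.sum_congr rfl fun l' _ => ?_
      rw [mul_assoc, ← Complex.exp_add]
      congr 1
      push_cast
      ring
    rw [intervalIntegral.integral_congr (fun x _ => h1 x)]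
    rw [intervalIntegral.integral_finset_sum]
    · have h2 : ∀ l' ∈ Finset.Icc (-(b:ℤ)) (b:ℤ),
          (∫ x in (0:ℝ)..1, a l' * Complex.exp (2 * (Real.pi:ℂ) * Complex.I * ((l' - l : ℤ):ℂ) * x))
            = a l' * (if l' - l = 0 then 1 else 0) := by
        intro l' _
        rw [intervalIntegral.integral_const_mul, orth15 (l' - l)]
      rw [Finset.sum_congr rfl h2]
      simp only [sub_eq_zero, mul_ite, mul_one, mul_zero]
      rw [Finset.sum_ite_eq' _ l a]
      simp [hl]
    · intro l' _
      apply Continuous.intervalIntegrable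
      fun_prop
  rw [key]
  calc ‖(∫ x in (0:ℝ)..1,
        g x * Complex.exp (-(2 * (Real.pi:ℂ) * Complex.I * l * x)))‖
      ≤ 1 * |(1:ℝ) - 0| := by
        apply intervalIntegral.norm_integral_le_of_norm_le_const
        intro x _
        rw [norm_mul, Complex.norm_exp]
        have : (-(2 * (Real.pi:ℂ) * Complex.I * l * x)).re = 0 := by
          simp [Complex.mul_re, Complex.mul_im]
        rw [this, Real.exp_zero, mul_one]
        exact hgbd x
    _ = 1 := by norm_num

theorem stmt_15 (b : ℕ) (hb : 0 < b) (a : ℤ → ℂ) (g : ℝ → ℂ)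
    (hg : ∀ x : ℝ, g x = ∑ k ∈ Finset.Icc (-(b : ℤ)) (b : ℤ),
        a k * Complex.exp (2 * (Real.pi : ℂ) * Complex.I * (k : ℂ) * (x : ℂ)))
    (hgbd : ∀ x : ℝ, ‖g x‖ ≤ 1)
    (m : ℕ) (hm : 0 < m) (k : ℤ) (hk : |k| ≤ (b : ℤ))
    (hak : a k = ∫ x in (0 : ℝ)..1,
        g x * Complex.exp (-(2 * (Real.pi : ℂ) * Complex.I * (k : ℂ) * (x : ℂ)))) :
    ‖((1 / (m : ℂ)) * (∑ i ∈ Finset.Icc 1 m,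
          g ((i : ℝ) / (m : ℝ)) *
            Complex.exp (-(2 * (Real.pi : ℂ) * Complex.I * (k : ℂ) * (i : ℂ) / (m : ℂ))))
        - a k)‖ ^ 2
      ≤ 16 * b ^ 2 * Real.pi ^ 2 / m ^ 2 := by
  have hm0 : (m:ℂ) ≠ 0 := Nat.cast_ne_zero.2 hm.ne'
  have hmR : (0:ℝ) < m := Nat.cast_pos.2 hm
  have hmZ : (0:ℤ) < m := Int.natCast_pos.2 hm
  set S : Finset ℤ := (Finset.Icc (-(b:ℤ)) b).filter (fun l => (m:ℤ) ∣ (l - k)) with hS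
  -- step 1 : rewrite each Riemann-sum term
  have hterm : ∀ i ∈ Finset.Icc 1 m,
      g ((i:ℝ)/(m:ℝ)) * Complex.exp (-(2 * (Real.pi:ℂ) * Complex.I * k * i / m)) =
      ∑ l ∈ Finset.Icc (-(b:ℤ)) (b:ℤ),
        a l * Complex.exp (2 * (Real.pi:ℂ) * Complex.I * ((l - k : ℤ):ℂ) * i / m) := by
    intro i _
    rw [hg, Finset.sum_mul]
    refine Finset.sum_congr rfl fun l _ => ?_
    rw [mul_assoc, ← Complex.exp_add]
    congr 1
    push_cast
    field_simp
    ring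
  have hsum : (∑ i ∈ Finset.Icc 1 m, g ((i:ℝ)/(m:ℝ)) *
        Complex.exp (-(2 * (Real.pi:ℂ) * Complex.I * k * i / m)))
      = ∑ l ∈ Finset.Icc (-(b:ℤ)) (b:ℤ), a l * (if (m:ℤ) ∣ (l - k) then (m:ℂ) else 0) := by
    rw [Finset.sum_congr rfl hterm, Finset.sum_comm]
    refine Finset.sum_congr rfl fun l _ => ?_
    rw [← Finset.mul_sum, geom15 m hm (l - k)]
  have hkmem : k ∈ S := by
    rw [hS, Finset.mem_filter, Finset.mem_Icc]
    exact ⟨⟨neg_le_of_abs_le hk, le_of_abs_le hk⟩, by simp⟩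
  have hR : (1 / (m : ℂ)) * (∑ i ∈ Finset.Icc 1 m, g ((i:ℝ)/(m:ℝ)) *
        Complex.exp (-(2 * (Real.pi:ℂ) * Complex.I * k * i / m))) - a k
      = ∑ l ∈ S.erase k, a l := by
    rw [hsum, Finset.mul_sum]
    have h3 : ∀ l ∈ Finset.Icc (-(b:ℤ)) (b:ℤ),
        (1/(m:ℂ)) * (a l * (if (m:ℤ) ∣ (l - k) then (m:ℂ) else 0))
          = if (m:ℤ) ∣ (l - k) then a l else 0 := by
      intro l _
      split_ifs with h
      · field_simp
      · simp
    rw [Finset.sum_congr rfl h3, ← Finset.sum_filter, ← hS,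
      Finset.sum_erase_eq_sub hkmem]
  rw [hR]
  -- step 2 : bound the remaining sum by the cardinality
  have habs : ‖∑ l ∈ S.erase k, a l‖ ≤ ((S.erase k).card : ℝ) := by
    calc ‖∑ l ∈ S.erase k, a l‖ ≤ ∑ l ∈ S.erase k, ‖a l‖ := norm_sum_le _ _
      _ ≤ ∑ l ∈ S.erase k, 1 := by
          refine Finset.sum_le_sum fun l hl => ?_
          have hl' : l ∈ Finset.Icc (-(b:ℤ)) (b:ℤ) :=
            (Finset.mem_filter.1 (Finset.mem_of_mem_erase hl)).1
          exact coeff_bd15 b a g hg hgbd l hl'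
      _ = ((S.erase k).card : ℝ) := by simp
  -- step 3 : cardinality bound
  set c : ℤ := (2 * (b:ℤ)) / m with hc
  have hc0 : 0 ≤ c := Int.ediv_nonneg (by positivity) (by positivity)
  have hcard : (S.erase k).card ≤ ((Finset.Icc (-c) c).erase 0).card := by
    apply Finset.card_le_card_of_injOn (fun l => (l - k) / m)
    · intro l hl
      rw [Finset.mem_coe, Finset.mem_erase, hS, Finset.mem_filter, Finset.mem_Icc] at hl
      obtain ⟨hlk, ⟨hl1, hl2⟩, hdvd⟩ := hl
      obtain ⟨t, ht⟩ := hdvd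
      have htv : (l - k) / (m:ℤ) = t := by
        rw [ht, Int.mul_ediv_cancel_left _ hmZ.ne']
      simp only [Finset.mem_coe, Finset.mem_erase, Finset.mem_Icc]; rw [htv]
      have habs2 : |l - k| ≤ 2 * (b:ℤ) := by
        have := neg_le_of_abs_le hk
        have := le_of_abs_le hk
        rw [abs_le]; omega
      have hmt : (m:ℤ) * |t| ≤ 2 * b := by
        calc (m:ℤ) * |t| = |(m:ℤ) * t| := by
              rw [abs_mul, abs_of_pos hmZ]
          _ = |l - k| := by rw [← ht]
          _ ≤ 2 * b := habs2
      have htc : |t| ≤ c := by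
        rw [hc, Int.le_ediv_iff_mul_le hmZ]
        calc |t| * m = m * |t| := mul_comm _ _
          _ ≤ 2 * b := hmt
      refine ⟨?_, neg_le_of_abs_le htc, le_of_abs_le htc⟩
      rintro rfl
      simp at ht
      omega
    · intro l hl l' hl' hEq
      rw [Finset.mem_coe, Finset.mem_erase, hS, Finset.mem_filter] at hl hl'
      have e1 : (l - k) / (m:ℤ) * m = l - k := Int.ediv_mul_cancel hl.2.2
      have e2 : (l' - k) / (m:ℤ) * m = l' - k := Int.ediv_mul_cancel hl'.2.2
      simp only at hEq
      rw [hEq] at e1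
      omega
  have hcardval : (((Finset.Icc (-c) c).erase 0).card : ℤ) = 2 * c := by
    rw [Finset.card_erase_of_mem (by rw [Finset.mem_Icc]; omega), Int.card_Icc]
    have : (c + 1 - -c).toNat = (2*c + 1).toNat := by ring_nf
    rw [this]
    omega
  -- step 4 : numeric bound
  have hcR : (c:ℝ) ≤ 2 * b / m := by
    rw [le_div_iff₀ hmR]
    have := Int.ediv_mul_le (2 * (b:ℤ)) hmZ.ne'
    rw [← hc] at this
    exact_mod_cast this
  have hA : ‖∑ l ∈ S.erase k, a l‖ ≤ 4 * b / m := by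
    refine habs.trans ?_
    have h4 : ((S.erase k).card : ℝ) ≤ 2 * (c:ℝ) := by
      have : ((S.erase k).card : ℤ) ≤ 2 * c := by
        rw [← hcardval]; exact_mod_cast hcard
      exact_mod_cast this
    refine h4.trans ?_
    calc 2 * (c:ℝ) ≤ 2 * (2 * b / m) := by linarith
      _ = 4 * b / m := by ring
  have hsq : ‖∑ l ∈ S.erase k, a l‖ ^ 2 ≤ (4 * (b:ℝ) / m) ^ 2 :=
    pow_le_pow_left₀ (norm_nonneg _) hA 2
  refine hsq.trans ?_
  have hπ : (1:ℝ) ≤ Real.pi ^ 2 := by nlinarith [Real.pi_gt_three]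
  rw [div_pow]
  rw [div_le_div_iff₀ (by positivity) (by positivity)]
  have hb2 : (0:ℝ) ≤ (b:ℝ)^2 * (m:ℝ)^2 := by positivity
  nlinarith [hb2, sq_nonneg ((b:ℝ) * (m:ℝ))]
end

section
/- Let W_1, W_2, … be i.i.d. real random variables with zero mean and finite variance σ², defined on the same probability space as and independent of the sequence (Y_i) (hence independent of M). For any integer k, the noise component of the estimate, Ŵ[k] = (1/M) Σ_{i=1}^{M} W_i e^{−j2πki/M}, satisfies E[|Ŵ[k]|²] ≤ σ² E[1/M]; consequently, if n(1 − ρ) > λ, then E[|Ŵ[k]|²] ≤ σ² λ/(n(1 − ρ) − λ). -/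
open MeasureTheory ProbabilityTheory Real
open scoped ENNReal NNReal

lemma aux_sq_half (t c : ℝ) (hc : 0 ≤ c) : t^2/2 ≤ (max (|t| - c) 0)^2 + c^2 := by
  rcases le_or_gt (|t|) c with h | h
  · have h2 : t^2 ≤ c^2 := by nlinarith [abs_nonneg t, sq_abs t]
    nlinarith [sq_nonneg (max (|t| - c) 0)]
  · rw [max_eq_left (by linarith)]
    nlinarith [sq_abs t, sq_nonneg (|t| - 2*c)]

lemma aux_abs_le_sq_add_one (x : ℝ) : ‖x‖ ≤ x^2 + 1 := by
  rw [Real.norm_eq_abs]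
  nlinarith [sq_nonneg (|x| - 1), sq_abs x, abs_nonneg x]

/-- the σ-algebra generated by a family of real random variables -/
def msSup {Ω : Type*} (Z : ℕ → Ω → ℝ) : MeasurableSpace Ω :=
  ⨆ i, MeasurableSpace.comap (Z i) inferInstance

lemma msSup_le {Ω : Type*} [m0 : MeasurableSpace Ω] (Z : ℕ → Ω → ℝ)
    (h : ∀ i, Measurable (Z i)) : msSup Z ≤ m0 :=
  iSup_le fun i => measurable_iff_comap_le.mp (h i)

lemma measurable_msSup {Ω : Type*} (Z : ℕ → Ω → ℝ) (i : ℕ) : Measurable[msSup Z] (Z i) :=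
  (Measurable.of_comap_le le_rfl).mono
    (le_iSup (fun j => MeasurableSpace.comap (Z j) inferInstance) i) le_rfl


/-- the σ-algebra generated by the variables other than index `m` -/
def msSupNe {Ω : Type*} (Z : ℕ → Ω → ℝ) (m : ℕ) : MeasurableSpace Ω :=
  ⨆ i ∈ ({m}ᶜ : Set ℕ), MeasurableSpace.comap (Z i) inferInstance

lemma msSupNe_le {Ω : Type*} (Z : ℕ → Ω → ℝ) (m : ℕ) : msSupNe Z m ≤ msSup Z :=
  iSup₂_le fun i _ => le_iSup (fun j => MeasurableSpace.comap (Z j) inferInstance) i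

lemma measurable_msSupNe {Ω : Type*} (Z : ℕ → Ω → ℝ) {i m : ℕ} (h : i ≠ m) :
    Measurable[msSupNe Z m] (Z i) := by
  refine (Measurable.of_comap_le le_rfl).mono ?_ le_rfl
  exact le_iSup₂ (f := fun (j : ℕ) (_ : j ∈ ({m}ᶜ : Set ℕ)) =>
    MeasurableSpace.comap (Z j) inferInstance) i h

lemma indep_comap_sup {Ω : Type*} [m0 : MeasurableSpace Ω] {μ : Measure Ω}
    [IsProbabilityMeasure μ]
    (W Y : ℕ → Ω → ℝ) (hWmeas : ∀ i, Measurable (W i)) (hYmeas : ∀ i, Measurable (Y i))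
    (hWindep : iIndepFun W μ)
    (hWY : Indep (msSup W) (msSup Y) μ) (m : ℕ) :
    Indep (MeasurableSpace.comap (W m) inferInstance) (msSup Y ⊔ msSupNe W m) μ := by
  classical
  set p1 : Set (Set Ω) :=
    {s | MeasurableSet[MeasurableSpace.comap (W m) inferInstance] s} with hp1_def
  set p2 : Set (Set Ω) := {s | ∃ b c, MeasurableSet[msSup Y] b ∧ MeasurableSet[msSupNe W m] c ∧
    s = b ∩ c} with hp2_def
  have hWm_le : MeasurableSpace.comap (W m) inferInstance ≤ msSup W :=
    le_iSup (fun j => MeasurableSpace.comap (W j) inferInstance) m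
  have hWm_ind : Indep (MeasurableSpace.comap (W m) inferInstance) (msSupNe W m) μ := by
    have h := indep_iSup_of_disjoint (m := fun i => MeasurableSpace.comap (W i) inferInstance)
      (fun i => measurable_iff_comap_le.mp (hWmeas i)) hWindep
      (S := {m}) (T := {m}ᶜ) disjoint_compl_right
    have h1 : (⨆ i ∈ ({m} : Set ℕ), MeasurableSpace.comap (W i) inferInstance)
        = MeasurableSpace.comap (W m) inferInstance := by simp
    rwa [h1] at h
  have hYW' : Indep (msSup Y) (msSupNe W m) μ :=
    indep_of_indep_of_le_right hWY.symm (msSupNe_le W m)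
  have hgen1 : MeasurableSpace.comap (W m) inferInstance = MeasurableSpace.generateFrom p1 :=
    (@MeasurableSpace.generateFrom_measurableSet Ω
      (MeasurableSpace.comap (W m) inferInstance)).symm
  have hgen2 : msSup Y ⊔ msSupNe W m = MeasurableSpace.generateFrom p2 := by
    apply le_antisymm
    · refine sup_le (fun s hs => ?_) (fun s hs => ?_)
      · exact MeasurableSpace.measurableSet_generateFrom
          ⟨s, Set.univ, hs, MeasurableSet.univ, (Set.inter_univ s).symm⟩
      · exact MeasurableSpace.measurableSet_generateFrom
          ⟨Set.univ, s, MeasurableSet.univ, hs, (Set.univ_inter s).symm⟩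
    · apply MeasurableSpace.generateFrom_le
      rintro s ⟨b, c, hb, hc, rfl⟩
      exact MeasurableSet.inter ((le_sup_left : msSup Y ≤ _) _ hb)
        ((le_sup_right : msSupNe W m ≤ _) _ hc)
  have hpi1 : IsPiSystem p1 := by
    rintro s hs t ht -
    exact @MeasurableSet.inter Ω (MeasurableSpace.comap (W m) inferInstance) s t hs ht
  have hpi2 : IsPiSystem p2 := by
    rintro s ⟨b1, c1, hb1, hc1, rfl⟩ t ⟨b2, c2, hb2, hc2, rfl⟩ _
    exact ⟨b1 ∩ b2, c1 ∩ c2, hb1.inter hb2, hc1.inter hc2, by ext ω; constructor <;>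
      (intro hω; simp only [Set.mem_inter_iff] at *; tauto)⟩
  have hsets : IndepSets p1 p2 μ := by
    rw [IndepSets_iff]
    rintro t1 t2 ht1 ⟨b, c, hb, hc, rfl⟩
    have h1 : μ ((t1 ∩ c) ∩ b) = μ (t1 ∩ c) * μ b := by
      refine (Indep_iff _ _ _).mp hWY _ _ ?_ hb
      exact MeasurableSet.inter (hWm_le _ ht1) ((msSupNe_le W m) _ hc)
    have h2 : μ (t1 ∩ c) = μ t1 * μ c := (Indep_iff _ _ _).mp hWm_ind _ _ ht1 hc
    have h3 : μ (b ∩ c) = μ b * μ c := (Indep_iff _ _ _).mp hYW' _ _ hb hc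
    have heq : t1 ∩ (b ∩ c) = (t1 ∩ c) ∩ b := by
      ext ω; simp only [Set.mem_inter_iff]; tauto
    rw [heq, h1, h2, h3]; ring
  rw [hgen1, hgen2]
  refine IndepSets.indep' (fun s hs => ?_) (fun s hs => ?_) hpi1 hpi2 hsets
  · exact measurable_iff_comap_le.mp (hWmeas m) _ hs
  · obtain ⟨b, c, hb, hc, rfl⟩ := hs
    exact MeasurableSet.inter ((msSup_le Y hYmeas) _ hb)
      (((msSupNe_le W m).trans (msSup_le W hWmeas)) _ hc)

theorem stmt_16
    {Ω : Type*} [MeasurableSpace Ω] (μ : Measure Ω) [IsProbabilityMeasure μ]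
    (ρ lam : ℝ) (n : ℕ)
    (hρ0 : 0 ≤ ρ) (hρ1 : ρ < 1) (hlam : 1 < lam) (hn : 0 < n)
    (Y X S : ℕ → Ω → ℝ) (M : Ω → ℕ)
    (hYmeas : ∀ i, Measurable (Y i))
    (hYindep : iIndepFun Y μ)
    (hYident : ∀ i, IdentDistrib (Y i) (Y 1) μ μ)
    (hYbd : ∀ i, ∀ᵐ ω ∂μ, 0 < Y i ω ∧ Y i ω ≤ lam / n)
    (hYmean : ∀ i, ∫ ω, Y i ω ∂μ = 1 / n)
    (hX1 : ∀ ω, X 1 ω = Y 1 ω)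
    (hXrec : ∀ i, 2 ≤ i → ∀ ω, X i ω = ρ * X (i - 1) ω + Y i ω)
    (hS : ∀ m ω, S m ω = ∑ i ∈ Finset.Icc 1 m, X i ω)
    (hMmeas : Measurable M)
    (hM : ∀ᵐ ω ∂μ, S (M ω) ω ≤ 1 ∧ 1 < S (M ω + 1) ω)
    (σ : ℝ) (W : ℕ → Ω → ℝ)
    (hWmeas : ∀ i, Measurable (W i))
    (hWindep : iIndepFun W μ)
    (hWident : ∀ i, IdentDistrib (W i) (W 1) μ μ)
    (hWmean : ∀ i, ∫ ω, W i ω ∂μ = 0)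
    (hWvar : ∀ i, ∫ ω, (W i ω) ^ 2 ∂μ = σ ^ 2)
    (hWY : Indep (⨆ i, MeasurableSpace.comap (W i) inferInstance)
                 (⨆ i, MeasurableSpace.comap (Y i) inferInstance) μ)
    (k : ℤ) :
    (∫ ω, ‖(1 / (M ω : ℂ)) * ∑ i ∈ Finset.Icc 1 (M ω),
          (W i ω : ℂ) * Complex.exp
            (-(2 * (Real.pi : ℂ) * Complex.I * (k : ℂ) * (i : ℂ) / (M ω : ℂ)))‖ ^ 2 ∂μ
        ≤ σ ^ 2 * ∫ ω, 1 / (M ω : ℝ) ∂μ) ∧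
    (lam < (n : ℝ) * (1 - ρ) →
      ∫ ω, ‖(1 / (M ω : ℂ)) * ∑ i ∈ Finset.Icc 1 (M ω),
          (W i ω : ℂ) * Complex.exp
            (-(2 * (Real.pi : ℂ) * Complex.I * (k : ℂ) * (i : ℂ) / (M ω : ℂ)))‖ ^ 2 ∂μ
        ≤ σ ^ 2 * lam / ((n : ℝ) * (1 - ρ) - lam)) := by
  classical
  have hWY' : Indep (msSup W) (msSup Y) μ := hWY
  have hmsY_le := msSup_le Y hYmeas
  have hmsW_le := msSup_le W hWmeas
  -- the exponential weights
  set e : ℕ → ℕ → ℂ := fun m i => Complex.exp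
      (-(2 * (Real.pi : ℂ) * Complex.I * (k : ℂ) * (i : ℂ) / (m : ℂ))) with he_def
  set F : ℕ → Ω → ℝ := fun m ω => ‖(1 / (m : ℂ)) * ∑ i ∈ Finset.Icc 1 m,
      (W i ω : ℂ) * e m i‖ ^ 2 with hF_def
  set f : Ω → ℝ := fun ω => F (M ω) ω with hf_def
  set G : Ω → ℝ := fun ω => 1 / (M ω : ℝ) with hG_def
  have hgoal1 : (∫ ω, ‖(1 / (M ω : ℂ)) * ∑ i ∈ Finset.Icc 1 (M ω),
          (W i ω : ℂ) * Complex.exp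
            (-(2 * (Real.pi : ℂ) * Complex.I * (k : ℂ) * (i : ℂ) / (M ω : ℂ)))‖ ^ 2 ∂μ)
      = ∫ ω, f ω ∂μ := rfl
  have he_abs : ∀ m i, ‖e m i‖ = 1 := by
    intro m i
    have h : (-(2 * (Real.pi : ℂ) * Complex.I * (k : ℂ) * (i : ℂ) / (m : ℂ)))
        = ((-(2 * Real.pi * (k : ℝ) * (i : ℝ) / (m : ℝ)) : ℝ) : ℂ) * Complex.I := by
      push_cast; ring
    rw [he_def]; simp only []; rw [h, Complex.norm_exp_ofReal_mul_I]
  have hFmeas : ∀ m, Measurable (F m) := by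
    intro m
    apply Measurable.pow_const
    apply continuous_norm.measurable.comp
    exact (measurable_const.mul (Finset.measurable_sum _ fun i _ =>
      (Complex.measurable_ofReal.comp (hWmeas i)).mul_const _))
  have hfmeas : Measurable f := by
    have h : Measurable (fun p : Ω × ℕ => F p.2 p.1) :=
      measurable_from_prod_countable_left fun m => hFmeas m
    have h2 : Measurable (fun ω : Ω => (ω, M ω)) := measurable_id.prodMk hMmeas
    have h3 : Measurable (fun ω : Ω => F (ω, M ω).2 (ω, M ω).1) := h.comp h2
    exact h3
  have hfnonneg : ∀ ω, 0 ≤ f ω := fun ω => sq_nonneg _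
  have hGmeas : Measurable G := by
    have h1 : Measurable (fun m : ℕ => 1 / (m : ℝ)) := measurable_from_top
    exact h1.comp hMmeas
  have hGnonneg : ∀ ω, 0 ≤ G ω := fun ω => by positivity
  have hGint : Integrable G μ := by
    refine Integrable.mono' (integrable_const (1:ℝ)) hGmeas.aestronglyMeasurable
      (Filter.Eventually.of_forall fun ω => ?_)
    rw [Real.norm_eq_abs, abs_of_nonneg (hGnonneg ω)]
    rw [hG_def]
    rcases Nat.eq_zero_or_pos (M ω) with h | h
    · simp [h]
    · have h1 : (1:ℝ) ≤ (M ω : ℝ) := by exact_mod_cast h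
      calc 1 / (M ω : ℝ) ≤ 1 / 1 := one_div_le_one_div_of_le one_pos h1
        _ = 1 := by norm_num
  -- the partition
  set B : ℕ → Set Ω := fun m => M ⁻¹' {m} with hB_def
  have hBmeas : ∀ m, MeasurableSet (B m) := fun m => hMmeas (measurableSet_singleton m)
  have hBdisj : Pairwise (Function.onFun Disjoint B) := by
    intro i j hij
    refine Set.disjoint_left.mpr fun ω hi hj => hij ?_
    simp only [hB_def, Set.mem_preimage, Set.mem_singleton_iff] at hi hj
    rw [← hi, ← hj]
  have hBunion : (⋃ m, B m) = Set.univ := by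
    ext ω; simp [hB_def]
  -- X and S measurability wrt msSup Y
  have hXmsY : ∀ i, Measurable[msSup Y] (X (i+1)) := by
    intro i; induction i with
    | zero =>
      have h : X 1 = Y 1 := funext hX1
      rw [h]; exact measurable_msSup Y 1
    | succ i ih =>
      have h : X (i+2) = fun ω => ρ * X (i+1) ω + Y (i+2) ω := by
        funext ω; have := hXrec (i+2) (by omega) ω; simpa using this
      rw [h]; exact (measurable_const.mul ih).add (measurable_msSup Y (i+2))
  have hSmsY : ∀ m, Measurable[msSup Y] (S m) := by
    intro m
    have h : S m = fun ω => ∑ i ∈ Finset.Icc 1 m, X i ω := funext (hS m)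
    rw [h]
    apply Finset.measurable_sum
    intro i hi
    have h1 : 1 ≤ i := (Finset.mem_Icc.mp hi).1
    obtain ⟨j, rfl⟩ : ∃ j, i = j + 1 := ⟨i - 1, by omega⟩
    exact hXmsY j
  set A : ℕ → Set Ω := fun m => {ω | S m ω ≤ 1 ∧ 1 < S (m+1) ω} with hA_def
  have hA_msY : ∀ m, MeasurableSet[msSup Y] (A m) := by
    intro m
    have h : A m = {ω | S m ω ≤ 1} ∩ {ω | 1 < S (m+1) ω} := rfl
    rw [h]
    exact MeasurableSet.inter (measurableSet_le (hSmsY m) measurable_const)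
      (measurableSet_lt measurable_const (hSmsY (m+1)))
  have hAmeas : ∀ m, MeasurableSet (A m) := fun m => hmsY_le _ (hA_msY m)
  have hgood : ∀ᵐ ω ∂μ, ∀ m, (ω ∈ B m ↔ ω ∈ A m) := by
    have hYpos : ∀ᵐ ω ∂μ, ∀ i, 0 < Y i ω := ae_all_iff.mpr fun i => (hYbd i).mono fun ω h => h.1
    filter_upwards [hYpos, hM] with ω hY hMω
    have hXpos : ∀ i, 0 < X (i+1) ω := by
      intro i; induction i with
      | zero => rw [hX1]; exact hY 1
      | succ i ih =>
        have h := hXrec (i+2) (by omega) ω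
        have h2 : (i+2) - 1 = i + 1 := by omega
        rw [h2] at h
        rw [h]
        have hne := mul_nonneg hρ0 ih.le
        linarith [hY (i+2)]
    have hmono : StrictMono (fun m => S m ω) := by
      apply strictMono_nat_of_lt_succ
      intro m
      have h := Finset.sum_Icc_succ_top (a := 1) (b := m) (by omega) (fun i => X i ω)
      show S m ω < S (m+1) ω
      rw [hS m ω, hS (m+1) ω, h]
      linarith [hXpos m]
    intro m
    simp only [hB_def, hA_def, Set.mem_preimage, Set.mem_singleton_iff, Set.mem_setOf_eq]
    constructor
    · rintro rfl; exact hMω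
    · rintro ⟨h1, h2⟩
      by_contra hne
      rcases Nat.lt_or_ge (M ω) m with h | h
      · have hle : M ω + 1 ≤ m := h
        have := hmono.monotone hle
        have this : S (M ω + 1) ω ≤ S m ω := this
        linarith [hMω.2]
      · have hlt : m < M ω := lt_of_le_of_ne h (Ne.symm hne)
        have hle : m + 1 ≤ M ω := hlt
        have := hmono.monotone hle
        have this : S (m + 1) ω ≤ S (M ω) ω := this
        linarith [hMω.1]
  have hBA : ∀ m, B m =ᵐ[μ] A m := fun m =>
    Filter.eventuallyEq_set.mpr (hgood.mono fun ω h => h m)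
  -- part 1
  have part1 : (∫ ω, f ω ∂μ) ≤ σ ^ 2 * ∫ ω, G ω ∂μ := by
    by_cases hfint : Integrable f μ
    · by_cases hW2 : Integrable (fun ω => (W 1 ω)^2) μ
      · -- main computation
        have hW2i : ∀ i, Integrable (fun ω => (W i ω)^2) μ := by
          intro i
          have hid : IdentDistrib (fun ω => (W i ω)^2) (fun ω => (W 1 ω)^2) μ μ :=
            (hWident i).comp (measurable_id.pow_const 2)
          exact hid.integrable_iff.mpr hW2
        have hWi_int : ∀ i, Integrable (W i) μ := by
          intro i
          have hc : Integrable (fun ω => (W i ω)^2 + 1) μ := (hW2i i).add (integrable_const 1)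
          exact Integrable.mono' hc (hWmeas i).aestronglyMeasurable
            (Filter.Eventually.of_forall fun ω => aux_abs_le_sq_add_one _)
        have hWmul_int : ∀ i j, Integrable (fun ω => W i ω * W j ω) μ := by
          intro i j
          rcases eq_or_ne i j with rfl | hij
          · have h := hW2i i; simpa [pow_two] using h
          · exact (hWindep.indepFun hij).integrable_mul (hWi_int i) (hWi_int j)
        have hWmul_exp : ∀ i j, (∫ ω, W i ω * W j ω ∂μ) = if i = j then σ^2 else 0 := by
          intro i j
          rcases eq_or_ne i j with rfl | hij
          · rw [if_pos rfl, ← hWvar i]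
            congr 1; funext ω; ring
          · rw [if_neg hij]
            have h2 : (∫ ω, W i ω * W j ω ∂μ) = (∫ ω, W i ω ∂μ) * ∫ ω, W j ω ∂μ :=
              (hWindep.indepFun hij).integral_fun_mul_eq_mul_integral (hWi_int i).aestronglyMeasurable
                (hWi_int j).aestronglyMeasurable
            rw [h2, hWmean i, zero_mul]
        have hABμ : ∀ m, μ (A m) = μ (B m) := fun m => (measure_congr (hBA m)).symm
        have key : ∀ m, (∫ ω in B m, f ω ∂μ) = σ^2 * ((μ (B m)).toReal * (1/(m:ℝ))) := by
          intro m
          rcases Nat.eq_zero_or_pos m with rfl | hm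
          · have hzero : Set.EqOn f (fun _ => (0:ℝ)) (B 0) := by
              intro ω hω
              have hM0 : M ω = 0 := hω
              simp only [hf_def, hF_def, hM0]
              simp
            rw [setIntegral_congr_fun (hBmeas 0) hzero]
            simp
          · have hmR : (0:ℝ) < m := by exact_mod_cast hm
            have h1 : (∫ ω in B m, f ω ∂μ) = ∫ ω in B m, F m ω ∂μ := by
              apply setIntegral_congr_fun (hBmeas m)
              intro ω hω
              have hMm : M ω = m := hω
              simp only [hf_def, hMm]
            have h2 : (∫ ω in B m, F m ω ∂μ) = ∫ ω in A m, F m ω ∂μ :=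
              setIntegral_congr_set (hBA m)
            set r : ℕ → ℕ → ℝ := fun i j => (e m i * (starRingEnd ℂ) (e m j)).re with hr_def
            have hnormSq : ∀ z : ℂ, Complex.normSq z = (z * (starRingEnd ℂ) z).re := by
              intro z; rw [Complex.mul_conj]; simp
            have hrii : ∀ i, r i i = 1 := by
              intro i
              simp only [hr_def]
              rw [← hnormSq, Complex.normSq_eq_norm_sq, he_abs]
              norm_num
            have hterm : ∀ (ω : Ω) (i j : ℕ),
                ((W i ω : ℂ) * e m i * ((starRingEnd ℂ) ((W j ω : ℂ) * e m j))).re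
                = (W i ω * W j ω) * r i j := by
              intro ω i j
              rw [map_mul, Complex.conj_ofReal]
              have hre : (W i ω : ℂ) * e m i * ((W j ω : ℂ) * (starRingEnd ℂ) (e m j))
                  = ((W i ω * W j ω : ℝ) : ℂ) * (e m i * (starRingEnd ℂ) (e m j)) := by
                push_cast; ring
              rw [hre, Complex.re_ofReal_mul]
            have hFexp : ∀ ω, F m ω = ∑ i ∈ Finset.Icc 1 m, ∑ j ∈ Finset.Icc 1 m,
                (W i ω * W j ω) * ((1/(m:ℝ)^2) * r i j) := by
              intro ω
              have habs : F m ω = (1/(m:ℝ))^2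
                  * Complex.normSq (∑ i ∈ Finset.Icc 1 m, (W i ω : ℂ) * e m i) := by
                simp only [hF_def]
                rw [← Complex.sq_norm, norm_mul, norm_div, norm_one, Complex.norm_natCast]
                ring
              rw [habs, hnormSq, map_sum, Finset.sum_mul_sum]
              rw [Complex.re_sum]
              simp only [Complex.re_sum, hterm]
              rw [Finset.mul_sum]
              refine Finset.sum_congr rfl fun i _ => ?_
              rw [Finset.mul_sum]
              refine Finset.sum_congr rfl fun j _ => ?_
              ring
            have h3 : (∫ ω in A m, F m ω ∂μ) = ∑ i ∈ Finset.Icc 1 m, ∑ j ∈ Finset.Icc 1 m,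
                (∫ ω in A m, W i ω * W j ω ∂μ) * ((1/(m:ℝ)^2) * r i j) := by
              rw [integral_congr_ae (Filter.Eventually.of_forall fun ω => hFexp ω)]
              rw [integral_finset_sum _ (fun i _ => integrable_finset_sum _
                (fun j _ => ((hWmul_int i j).integrableOn).mul_const _))]
              refine Finset.sum_congr rfl fun i _ => ?_
              rw [integral_finset_sum _ (fun j _ => ((hWmul_int i j).integrableOn).mul_const _)]
              refine Finset.sum_congr rfl fun j _ => ?_
              rw [integral_mul_const]
            have h4 : ∀ i j, (∫ ω in A m, W i ω * W j ω ∂μ)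
                = ((if i = j then σ^2 else 0)) * (μ (B m)).toReal := by
              intro i j
              have hind : IndepFun (fun ω => W i ω * W j ω)
                  ((A m).indicator (fun _ => (1:ℝ))) μ := by
                have hle1 : MeasurableSpace.comap (fun ω => W i ω * W j ω) inferInstance
                    ≤ msSup W :=
                  measurable_iff_comap_le.mp ((measurable_msSup W i).mul (measurable_msSup W j))
                have hle2 : MeasurableSpace.comap ((A m).indicator (fun _ => (1:ℝ)))
                    inferInstance ≤ msSup Y := by
                  apply measurable_iff_comap_le.mp
                  exact Measurable.indicator measurable_const (hA_msY m)
                exact indep_of_indep_of_le_right (indep_of_indep_of_le_left hWY' hle1) hle2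
              have heq : (∫ ω in A m, W i ω * W j ω ∂μ)
                  = ∫ ω, (W i ω * W j ω) * ((A m).indicator (fun _ => (1:ℝ)) ω) ∂μ := by
                rw [← integral_indicator (hAmeas m)]
                congr 1
                funext ω
                by_cases hω : ω ∈ A m <;> simp [Set.indicator, hω]
              have hprod : (∫ ω, (W i ω * W j ω) * ((A m).indicator (fun _ => (1:ℝ)) ω) ∂μ)
                  = (∫ ω, W i ω * W j ω ∂μ) * ∫ ω, (A m).indicator (fun _ => (1:ℝ)) ω ∂μ :=
                hind.integral_fun_mul_eq_mul_integral (hWmul_int i j).aestronglyMeasurable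
                  ((integrable_const (1:ℝ)).indicator (hAmeas m)).aestronglyMeasurable
              rw [heq, hprod, hWmul_exp i j, integral_indicator_const _ (hAmeas m),
                smul_eq_mul, mul_one, measureReal_def, hABμ m]
            rw [h1, h2, h3]
            simp only [h4]
            have hinner : ∀ i ∈ Finset.Icc 1 m, (∑ j ∈ Finset.Icc 1 m,
                ((if i = j then σ^2 else 0) * (μ (B m)).toReal) * ((1/(m:ℝ)^2) * r i j))
                = σ^2 * (μ (B m)).toReal * (1/(m:ℝ)^2) := by
              intro i hi
              rw [Finset.sum_eq_single i]
              · rw [if_pos rfl, hrii]; ring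
              · intro j _ hne
                rw [if_neg (fun h => hne h.symm)]
                ring
              · intro hnotin; exact absurd hi hnotin
            rw [Finset.sum_congr rfl hinner, Finset.sum_const, Nat.card_Icc]
            have hc : m + 1 - 1 = m := by omega
            rw [hc, nsmul_eq_mul]
            field_simp
        have hsumf : HasSum (fun m => ∫ ω in B m, f ω ∂μ) (∫ ω, f ω ∂μ) := by
          have h := hasSum_integral_iUnion hBmeas hBdisj
            (by rw [hBunion]; exact hfint.integrableOn)
          rwa [hBunion, setIntegral_univ] at h
        have hsumG : HasSum (fun m => ∫ ω in B m, G ω ∂μ) (∫ ω, G ω ∂μ) := by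
          have h := hasSum_integral_iUnion hBmeas hBdisj
            (by rw [hBunion]; exact hGint.integrableOn)
          rwa [hBunion, setIntegral_univ] at h
        have hGm : ∀ m, (∫ ω in B m, G ω ∂μ) = (μ (B m)).toReal * (1/(m:ℝ)) := by
          intro m
          have h : Set.EqOn G (fun _ => 1/(m:ℝ)) (B m) := by
            intro ω hω
            have hMm : M ω = m := hω
            simp only [hG_def, hMm]
          rw [setIntegral_congr_fun (hBmeas m) h, setIntegral_const, smul_eq_mul, measureReal_def]
        have hh1 : HasSum (fun m => σ^2 * ((μ (B m)).toReal * (1/(m:ℝ)))) (∫ ω, f ω ∂μ) := by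
          have h := hsumf
          simp only [key] at h
          exact h
        have hh2 : HasSum (fun m => σ^2 * ((μ (B m)).toReal * (1/(m:ℝ))))
            (σ^2 * ∫ ω, G ω ∂μ) := by
          have h := hsumG
          simp only [hGm] at h
          exact h.mul_left _
        exact (hh1.unique hh2).le
      · -- corner case
        have hsig : σ^2 = 0 := by rw [← hWvar 1, integral_undef hW2]
        rw [hsig, zero_mul]
        by_cases hall : ∀ m, μ (B (m+1)) = 0
        · have hae0 : f =ᵐ[μ] (fun _ => (0:ℝ)) := by
            have hnull : μ (⋃ m, B (m+1)) = 0 := measure_iUnion_null hall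
            have hnm := measure_eq_zero_iff_ae_notMem.mp hnull
            filter_upwards [hnm] with ω hω
            have hM0 : M ω = 0 := by
              by_contra hne
              refine hω (Set.mem_iUnion.mpr ⟨M ω - 1, ?_⟩)
              show ω ∈ B (M ω - 1 + 1)
              have heq : M ω - 1 + 1 = M ω := by omega
              rw [heq]
              exact rfl
            simp only [hf_def, hF_def, hM0]
            simp
          rw [integral_congr_ae hae0]
          simp
        · push_neg at hall
          obtain ⟨m', hm'⟩ := hall
          exfalso
          set m := m' + 1 with hm_def
          have hm1 : 1 ≤ m := by omega
          have hmR : (0:ℝ) < m := by exact_mod_cast Nat.succ_pos m'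
          set V : Ω → ℝ := fun ω =>
            ‖∑ i ∈ Finset.Icc 1 (m-1), (W i ω : ℂ) * e m i‖ with hV_def
          have hVmeas : Measurable V := by
            apply continuous_norm.measurable.comp
            exact Finset.measurable_sum _ fun i _ =>
              (Complex.measurable_ofReal.comp (hWmeas i)).mul_const _
          have hBpos : 0 < μ (B m) := zero_lt_iff.mpr hm'
          have htends : Filter.Tendsto (fun c : ℕ => μ {ω | (c:ℝ) < V ω})
              Filter.atTop (nhds 0) := by
            have h0 : (⋂ c : ℕ, {ω | (c:ℝ) < V ω}) = ∅ := by
              ext ω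
              simp only [Set.mem_iInter, Set.mem_setOf_eq, Set.mem_empty_iff_false,
                iff_false, not_forall, not_lt]
              obtain ⟨c, hc⟩ := exists_nat_ge (V ω)
              exact ⟨c, hc⟩
            have hanti : Antitone (fun c : ℕ => {ω | (c:ℝ) < V ω}) := by
              intro a b hab
              refine Set.setOf_subset_setOf.mpr fun ω hlt => lt_of_le_of_lt ?_ hlt
              exact_mod_cast hab
            have h := tendsto_measure_iInter_atTop
              (fun c => (measurableSet_lt measurable_const hVmeas).nullMeasurableSet)
              hanti ⟨0, measure_ne_top μ _⟩
            rwa [h0, measure_empty] at h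
          obtain ⟨c, hc⟩ := (htends.eventually_lt_const hBpos).exists
          set C : Set Ω := {ω | V ω ≤ (c:ℝ)} with hC_def
          set D : Set Ω := A m ∩ C with hD_def
          have hABμ : μ (A m) = μ (B m) := (measure_congr (hBA m)).symm
          have hDpos : μ D ≠ 0 := by
            intro h0
            have hsub : A m ⊆ D ∪ {ω | (c:ℝ) < V ω} := by
              intro ω hω
              by_cases hωC : ω ∈ C
              · exact Or.inl ⟨hω, hωC⟩
              · exact Or.inr (by simpa [hC_def, not_le] using hωC)
            have hle2 : μ (D ∪ {ω | (c:ℝ) < V ω}) ≤ μ D + μ {ω | (c:ℝ) < V ω} :=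
              measure_union_le _ _
            have hle := (measure_mono hsub).trans hle2
            rw [h0, zero_add, hABμ] at hle
            exact absurd hle (not_le.mpr hc)
          have hmain_ind := indep_comap_sup W Y hWmeas hYmeas hWindep hWY' m
          have hVmsW' : Measurable[msSupNe W m] V := by
            apply continuous_norm.measurable.comp
            apply Finset.measurable_sum
            intro i hi
            have hiv : i ≠ m := by
              have := (Finset.mem_Icc.mp hi).2
              omega
            exact (Complex.measurable_ofReal.comp (measurable_msSupNe W hiv)).mul_const _
          have hD_m' : MeasurableSet[msSup Y ⊔ msSupNe W m] D := by
            refine MeasurableSet.inter ((le_sup_left : msSup Y ≤ _) _ (hA_msY m))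
              ((le_sup_right : msSupNe W m ≤ _) _ ?_)
            exact measurableSet_le hVmsW' measurable_const
          have hsup_le : (msSup Y ⊔ msSupNe W m) ≤ ‹MeasurableSpace Ω› :=
            sup_le hmsY_le ((msSupNe_le W m).trans hmsW_le)
          have hDmeas : MeasurableSet D := hsup_le _ hD_m'
          set h : Ω → ℝ≥0∞ := fun ω => ENNReal.ofReal ((max (|W m ω| - c) 0)^2) with hh_def
          have hφmeas : Measurable (fun x : ℝ => ENNReal.ofReal ((max (|x| - (c:ℝ)) 0)^2)) :=
            (ENNReal.continuous_ofReal.comp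
              (((continuous_abs.sub continuous_const).max continuous_const).pow 2)).measurable
          have hhcomap : Measurable[MeasurableSpace.comap (W m) inferInstance] h :=
            hφmeas.comp (Measurable.of_comap_le le_rfl)
          have hhmeas : Measurable h := hφmeas.comp (hWmeas m)
          have hkey1 : (∫⁻ ω, h ω * D.indicator (fun _ => (1:ℝ≥0∞)) ω ∂μ)
              = (∫⁻ ω, h ω ∂μ) * μ D := by
            rw [lintegral_mul_eq_lintegral_mul_lintegral_of_independent_measurableSpace
              (measurable_iff_comap_le.mp (hWmeas m)) hsup_le
              hmain_ind hhcomap (Measurable.indicator measurable_const hD_m')]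
            congr 1
            rw [lintegral_indicator hDmeas]
            simp
          have hWm2_inf : (∫⁻ ω, ENNReal.ofReal ((W m ω)^2) ∂μ) = ⊤ := by
            have hid : IdentDistrib (fun ω => ENNReal.ofReal ((W m ω)^2))
                (fun ω => ENNReal.ofReal ((W 1 ω)^2)) μ μ :=
              (hWident m).comp (ENNReal.measurable_ofReal.comp (measurable_id.pow_const 2))
            rw [hid.lintegral_eq]
            by_contra hfin
            apply hW2
            refine ⟨((hWmeas 1).pow_const 2).aestronglyMeasurable, ?_⟩
            rw [hasFiniteIntegral_iff_norm]
            have hcg : (∫⁻ ω, ENNReal.ofReal ‖(W 1 ω)^2‖ ∂μ)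
                = ∫⁻ ω, ENNReal.ofReal ((W 1 ω)^2) ∂μ :=
              lintegral_congr fun ω => by rw [Real.norm_eq_abs, abs_of_nonneg (sq_nonneg _)]
            rw [hcg]
            exact lt_top_iff_ne_top.mpr hfin
          have hh_inf : (∫⁻ ω, h ω ∂μ) = ⊤ := by
            by_contra hne
            have hfin := lt_top_iff_ne_top.mpr hne
            have hb : ∀ ω, ENNReal.ofReal ((W m ω)^2)
                ≤ 2 * (h ω + ENNReal.ofReal ((c:ℝ)^2)) := by
              intro ω
              have haux := aux_sq_half (W m ω) c (Nat.cast_nonneg c)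
              calc ENNReal.ofReal ((W m ω)^2)
                  ≤ ENNReal.ofReal (2*((max (|W m ω| - (c:ℝ)) 0)^2 + (c:ℝ)^2)) :=
                    ENNReal.ofReal_le_ofReal (by linarith)
                _ = 2 * (h ω + ENNReal.ofReal ((c:ℝ)^2)) := by
                    rw [ENNReal.ofReal_mul (by norm_num : (0:ℝ) ≤ 2),
                      ENNReal.ofReal_add (sq_nonneg _) (sq_nonneg _)]
                    simp only [hh_def, ENNReal.ofReal_ofNat]
            have hle := lintegral_mono (μ := μ) hb
            rw [hWm2_inf] at hle
            have hlt : (∫⁻ ω, 2 * (h ω + ENNReal.ofReal ((c:ℝ)^2)) ∂μ) < ⊤ := by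
              rw [lintegral_const_mul (f := fun ω => h ω + ENNReal.ofReal ((c:ℝ)^2)) 2 (hhmeas.add measurable_const),
                lintegral_add_right _ measurable_const, lintegral_const, measure_univ, mul_one]
              refine ENNReal.mul_lt_top ?_ ?_
              · norm_num
              · exact ENNReal.add_lt_top.mpr ⟨hfin, ENNReal.ofReal_lt_top⟩
            exact absurd (hle.trans_lt hlt) (lt_irrefl ⊤)
          have hbound : ∀ᵐ ω ∂μ, h ω * D.indicator (fun _ => (1:ℝ≥0∞)) ω
              ≤ ENNReal.ofReal ((m:ℝ)^2) * ENNReal.ofReal (f ω) := by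
            have hBAm := Filter.eventuallyEq_set.mp (hBA m)
            filter_upwards [hBAm] with ω hω
            by_cases hωD : ω ∈ D
            · rw [Set.indicator_of_mem hωD, mul_one]
              have hMm : M ω = m := hω.mpr hωD.1
              simp only [hh_def]
              rw [← ENNReal.ofReal_mul (sq_nonneg ((m:ℝ)))]
              apply ENNReal.ofReal_le_ofReal
              have hfω : f ω = F m ω := by simp only [hf_def, hMm]
              have hsplit : (∑ i ∈ Finset.Icc 1 m, (W i ω : ℂ) * e m i)
                  = (∑ i ∈ Finset.Icc 1 (m-1), (W i ω : ℂ) * e m i) + (W m ω : ℂ) * e m m := by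
                have hm2 : m - 1 + 1 = m := by omega
                conv_lhs => rw [← hm2]
                rw [Finset.sum_Icc_succ_top (by omega)]
                rw [hm2]
              have hV_le : V ω ≤ (c:ℝ) := hωD.2
              have habs : max (|W m ω| - (c:ℝ)) 0
                  ≤ ‖∑ i ∈ Finset.Icc 1 m, (W i ω : ℂ) * e m i‖ := by
                refine max_le ?_ (norm_nonneg _)
                rw [hsplit]
                have hz : ‖(W m ω : ℂ) * e m m‖ = |W m ω| := by
                  rw [norm_mul, he_abs, mul_one, Complex.norm_real, Real.norm_eq_abs]
                have hvv : ‖∑ i ∈ Finset.Icc 1 (m-1), (W i ω : ℂ) * e m i‖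
                    = V ω := rfl
                have htri : ‖(W m ω : ℂ) * e m m‖
                    ≤ ‖(∑ i ∈ Finset.Icc 1 (m-1), (W i ω : ℂ) * e m i)
                      + (W m ω : ℂ) * e m m‖
                      + ‖∑ i ∈ Finset.Icc 1 (m-1), (W i ω : ℂ) * e m i‖ := by
                  have hzz : (W m ω : ℂ) * e m m
                      = ((∑ i ∈ Finset.Icc 1 (m-1), (W i ω : ℂ) * e m i)
                        + (W m ω : ℂ) * e m m)
                        - (∑ i ∈ Finset.Icc 1 (m-1), (W i ω : ℂ) * e m i) := by ring
                  calc ‖(W m ω : ℂ) * e m m‖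
                      = ‖((∑ i ∈ Finset.Icc 1 (m-1), (W i ω : ℂ) * e m i)
                        + (W m ω : ℂ) * e m m)
                        - (∑ i ∈ Finset.Icc 1 (m-1), (W i ω : ℂ) * e m i)‖ := by rw [← hzz]
                    _ ≤ _ := norm_sub_le _ _
                rw [hz, hvv] at htri
                linarith
              have hnn : 0 ≤ max (|W m ω| - (c:ℝ)) 0 := le_max_right _ _
              have hsq := pow_le_pow_left₀ hnn habs 2
              have hfval : (m:ℝ)^2 * f ω
                  = ‖∑ i ∈ Finset.Icc 1 m, (W i ω : ℂ) * e m i‖ ^ 2 := by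
                rw [hfω]
                simp only [hF_def]
                rw [norm_mul, norm_div, norm_one, Complex.norm_natCast]
                field_simp
              rw [hfval]
              exact hsq
            · rw [Set.indicator_of_notMem hωD, mul_zero]
              exact zero_le
          have hfin2 : (∫⁻ ω, ENNReal.ofReal (f ω) ∂μ) < ⊤ := by
            have h2 := hfint.2
            rw [hasFiniteIntegral_iff_norm] at h2
            have hcg : (∫⁻ ω, ENNReal.ofReal ‖f ω‖ ∂μ) = ∫⁻ ω, ENNReal.ofReal (f ω) ∂μ :=
              lintegral_congr fun ω => by rw [Real.norm_eq_abs, abs_of_nonneg (hfnonneg ω)]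
            rwa [hcg] at h2
          have hcontr : (⊤:ℝ≥0∞) ≤ ENNReal.ofReal ((m:ℝ)^2) * ∫⁻ ω, ENNReal.ofReal (f ω) ∂μ := by
            calc (⊤:ℝ≥0∞) = (∫⁻ ω, h ω ∂μ) * μ D := by rw [hh_inf, ENNReal.top_mul hDpos]
              _ = ∫⁻ ω, h ω * D.indicator (fun _ => (1:ℝ≥0∞)) ω ∂μ := hkey1.symm
              _ ≤ ∫⁻ ω, ENNReal.ofReal ((m:ℝ)^2) * ENNReal.ofReal (f ω) ∂μ :=
                  lintegral_mono_ae hbound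
              _ = ENNReal.ofReal ((m:ℝ)^2) * ∫⁻ ω, ENNReal.ofReal (f ω) ∂μ :=
                  lintegral_const_mul _ (ENNReal.measurable_ofReal.comp hfmeas)
          have hlt2 : ENNReal.ofReal ((m:ℝ)^2) * (∫⁻ ω, ENNReal.ofReal (f ω) ∂μ) < ⊤ :=
            ENNReal.mul_lt_top ENNReal.ofReal_lt_top hfin2
          exact absurd hcontr (not_le.mpr hlt2)
    · rw [integral_undef hfint]
      exact mul_nonneg (sq_nonneg σ) (integral_nonneg hGnonneg)
  -- part 2 bound on E[1/M]
  have hGbound : lam < (n : ℝ) * (1 - ρ) → (∫ ω, G ω ∂μ) ≤ lam / ((n : ℝ) * (1 - ρ) - lam) := by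
    intro hcond
    have hlam0 : (0:ℝ) < lam := lt_trans one_pos hlam
    have hL0 : (0:ℝ) < (n : ℝ) * (1 - ρ) := lt_trans hlam0 hcond
    have hn0 : (0:ℝ) < n := by exact_mod_cast hn
    have h1ρ : (0:ℝ) < 1 - ρ := by linarith
    have hae : ∀ᵐ ω ∂μ, G ω ≤ lam / ((n : ℝ) * (1 - ρ) - lam) := by
      have hYb : ∀ᵐ ω ∂μ, ∀ i, Y i ω ≤ lam / n :=
        ae_all_iff.mpr fun i => (hYbd i).mono fun ω h => h.2
      filter_upwards [hYb, hM] with ω hYb hMω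
      have hXb : ∀ i, X (i+1) ω ≤ lam / ((n : ℝ) * (1 - ρ)) := by
        intro i; induction i with
        | zero =>
          rw [hX1]
          refine (hYb 1).trans ?_
          apply div_le_div_of_nonneg_left hlam0.le hL0
          nlinarith
        | succ i ih =>
          have h := hXrec (i+2) (by omega) ω
          have h2 : (i+2) - 1 = i + 1 := by omega
          rw [h2] at h
          rw [h]
          have key : ρ * (lam / ((n : ℝ) * (1 - ρ))) + lam / n = lam / ((n : ℝ) * (1 - ρ)) := by
            field_simp
            ring
          calc ρ * X (i+1) ω + Y (i+2) ω ≤ ρ * (lam / ((n : ℝ) * (1 - ρ))) + lam / n :=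
                add_le_add (mul_le_mul_of_nonneg_left ih hρ0) (hYb (i+2))
            _ = lam / ((n : ℝ) * (1 - ρ)) := key
      have hSb : S (M ω + 1) ω ≤ ((M ω : ℝ) + 1) * (lam / ((n : ℝ) * (1 - ρ))) := by
        rw [hS]
        calc ∑ i ∈ Finset.Icc 1 (M ω + 1), X i ω
            ≤ ∑ _i ∈ Finset.Icc 1 (M ω + 1), lam / ((n : ℝ) * (1 - ρ)) := by
              apply Finset.sum_le_sum
              intro i hi
              obtain ⟨j, rfl⟩ : ∃ j, i = j+1 :=
                ⟨i-1, by have := (Finset.mem_Icc.mp hi).1; omega⟩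
              exact hXb j
          _ = ((M ω : ℝ) + 1) * (lam / ((n : ℝ) * (1 - ρ))) := by
              rw [Finset.sum_const, Nat.card_Icc]
              have : M ω + 1 + 1 - 1 = M ω + 1 := by omega
              rw [this, nsmul_eq_mul]
              push_cast
              ring
      have h1 : 1 < ((M ω : ℝ) + 1) * (lam / ((n : ℝ) * (1 - ρ))) := lt_of_lt_of_le hMω.2 hSb
      have hM1 : ((n : ℝ) * (1 - ρ) - lam)/lam < (M ω : ℝ) := by
        have h3 : 1 * ((n : ℝ) * (1 - ρ)) < (((M ω : ℝ) + 1) * (lam / ((n : ℝ) * (1 - ρ)))) * ((n : ℝ) * (1 - ρ)) :=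
          mul_lt_mul_of_pos_right h1 hL0
        rw [one_mul] at h3
        have h4 : (((M ω : ℝ) + 1) * (lam / ((n : ℝ) * (1 - ρ)))) * ((n : ℝ) * (1 - ρ))
            = ((M ω : ℝ) + 1) * lam := by field_simp
        rw [h4] at h3
        rw [div_lt_iff₀ hlam0]
        nlinarith
      have hc0 : (0:ℝ) < ((n : ℝ) * (1 - ρ) - lam)/lam := div_pos (by linarith) hlam0
      simp only [hG_def]
      calc 1 / (M ω : ℝ) ≤ 1 / (((n : ℝ) * (1 - ρ) - lam)/lam) :=
            one_div_le_one_div_of_le hc0 hM1.le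
        _ = lam / ((n : ℝ) * (1 - ρ) - lam) := one_div_div _ _
    calc ∫ ω, G ω ∂μ ≤ ∫ _ω, lam / ((n : ℝ) * (1 - ρ) - lam) ∂μ :=
          integral_mono_ae hGint (integrable_const _) hae
      _ = lam / ((n : ℝ) * (1 - ρ) - lam) := by simp
  rw [hgoal1]
  refine ⟨part1, fun hcond => part1.trans ?_⟩
  calc σ ^ 2 * ∫ ω, G ω ∂μ ≤ σ ^ 2 * (lam / ((n : ℝ) * (1 - ρ) - lam)) :=
        mul_le_mul_of_nonneg_left (hGbound hcond) (sq_nonneg σ)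
    _ = σ ^ 2 * lam / ((n : ℝ) * (1 - ρ) - lam) := by ring
end
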